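/- arXiv:2105.07186 — 4 statements merged into one kernel-verified Lean document; each statement's English description precedes it below -/
import Mathlib

section
/- Let R be a commutative ring, let 2 ≤ s ≤ t be integers, let (X_{ij})_{1≤i≤s,1≤j≤t} be an s×t matrix of elements of R, let I_s(X) be the ideal of R generated by all s×s minors of (X_{ij}), and let A = R/I_s(X) with x_{ij} the image of X_{ij}. Let I = LA where L is the ideal of R generated by all the X_{ij}, and let q = QA where Q is the ideal of R generated by the X_{ij} with j−i < 0 or j−i > t−s, together with the elements X_{ij} − X_{i−1,j−1} for 2 ≤ i ≤ s and 0 ≤ j−i ≤ t−s. Then for all j_1,…,j_s ∈ {1,…,s} and k_1,…,k_s ∈ {1,…,t}, either the product x_{j_1,k_1}·x_{j_2,k_2}·⋯·x_{j_s,k_s} lies in q·I^{s−1}, or there exist indices 1 ≤ i_1 < i_2 < ⋯ < i_s ≤ t such that x_{j_1,k_1}·⋯·x_{j_s,k_s} − x_{1,i_1}·x_{2,i_2}·⋯·x_{s,i_s} ∈ q·I^{s−1}. -/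
/-- The ideal of `R` generated by the `s × s` minors of the `s × t` matrix `X`. -/
def minorsIdeal (R : Type*) [CommRing R] {s t : ℕ} (X : Fin s → Fin t → R) : Ideal R :=
  Ideal.span {r | ∃ c : Fin s → Fin t, StrictMono c ∧
    r = Matrix.det (Matrix.of fun i j : Fin s => X i (c j))}

/-- The ideal `L` of `R` generated by all the entries `X i j`. -/
def entriesIdeal (R : Type*) [CommRing R] {s t : ℕ} (X : Fin s → Fin t → R) : Ideal R :=
  Ideal.span {r | ∃ i j, r = X i j}

/-- The ideal `Q` of `R` generated by the `X i j` with `j − i < 0` or `j − i > t − s`,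
together with the differences `X i j − X (i−1) (j−1)` for `i ≥ 1` (second row on) and
`0 ≤ j − i ≤ t − s`.  (Indices here are 0-based, so `i` ranges over `0, …, s−1` and `j`
over `0, …, t−1`; the conditions on `j − i` are the same as for the 1-based indices of
the paper.) -/
def diagIdeal (R : Type*) [CommRing R] {s t : ℕ} (X : Fin s → Fin t → R) : Ideal R :=
  Ideal.span
    ({r | ∃ (i : Fin s) (j : Fin t), ((j : ℕ) < (i : ℕ) ∨ t - s < (j : ℕ) - (i : ℕ)) ∧
        r = X i j} ∪
     {r | ∃ (i : Fin s) (j : Fin t), 1 ≤ (i : ℕ) ∧ (i : ℕ) ≤ (j : ℕ) ∧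
        (j : ℕ) - (i : ℕ) ≤ t - s ∧
        r = X i j - X ⟨(i : ℕ) - 1, Nat.lt_of_le_of_lt (Nat.sub_le _ _) i.isLt⟩
              ⟨(j : ℕ) - 1, Nat.lt_of_le_of_lt (Nat.sub_le _ _) j.isLt⟩})

/-- A product of elements of `I` lies in `I ^ card`. -/
lemma aux_prod_mem_pow {A ι : Type*} [CommRing A] (I : Ideal A) (S : Finset ι) (a : ι → A) :
    (∀ u ∈ S, a u ∈ I) → (∏ u ∈ S, a u) ∈ I ^ S.card := by
  classical
  induction S using Finset.induction with
  | empty => simp [Ideal.one_eq_top]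
  | @insert v S hv ih =>
    intro ha
    rw [Finset.prod_insert hv, Finset.card_insert_of_notMem hv, pow_succ, mul_comm (a v)]
    exact Ideal.mul_mem_mul (ih fun u hu => ha u (by simp [hu])) (ha v (by simp))

lemma aux_prod_sub_mem {A ι : Type*} [CommRing A] (q I : Ideal A) (S : Finset ι) (a b : ι → A) :
    (∀ u ∈ S, a u ∈ I) → (∀ u ∈ S, b u ∈ I) → (∀ u ∈ S, a u - b u ∈ q) →
    (∏ u ∈ S, a u) - ∏ u ∈ S, b u ∈ q * I ^ (S.card - 1) := by
  classical
  induction S using Finset.induction with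
  | empty => intro _ _ _; simp
  | @insert v S hv ih =>
    intro ha hb hab
    rw [Finset.prod_insert hv, Finset.prod_insert hv, Finset.card_insert_of_notMem hv,
      Nat.add_sub_cancel]
    have key : a v * ∏ u ∈ S, a u - b v * ∏ u ∈ S, b u
        = (a v - b v) * ∏ u ∈ S, a u + ((∏ u ∈ S, a u) - ∏ u ∈ S, b u) * b v := by ring
    rw [key]
    refine add_mem ?_ ?_
    · exact Ideal.mul_mem_mul (hab v (by simp))
        (aux_prod_mem_pow I S a fun u hu => ha u (by simp [hu]))
    · rcases Finset.eq_empty_or_nonempty S with rfl | hS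
      · simp
      · have h1 : 1 ≤ S.card := hS.card_pos
        have hE : q * I ^ S.card = (q * I ^ (S.card - 1)) * I := by
          rw [mul_assoc, ← pow_succ, Nat.sub_add_cancel h1]
        rw [hE]
        exact Ideal.mul_mem_mul
          (ih (fun u hu => ha u (by simp [hu])) (fun u hu => hb u (by simp [hu]))
            (fun u hu => hab u (by simp [hu])))
          (hb v (by simp))

/-- Telescoping along the diagonal: inside the band, `X i j ≡ X 0 (j - i)` modulo `Q`. -/
lemma diag_shift {R : Type*} [CommRing R] {s t : ℕ} (hs0 : 0 < s) (X : Fin s → Fin t → R) :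
    ∀ (n : ℕ) (i : Fin s) (j : Fin t), (i : ℕ) = n → (i : ℕ) ≤ (j : ℕ) →
      (j : ℕ) - (i : ℕ) ≤ t - s →
      X i j - X ⟨0, hs0⟩ ⟨(j : ℕ) - (i : ℕ), Nat.lt_of_le_of_lt (Nat.sub_le _ _) j.isLt⟩
        ∈ diagIdeal R X := by
  intro n
  induction n with
  | zero =>
    intro i j hi hij hb
    have hi0 : i = ⟨0, hs0⟩ := Fin.ext hi
    have hj : (⟨(j : ℕ) - (i : ℕ), Nat.lt_of_le_of_lt (Nat.sub_le _ _) j.isLt⟩ : Fin t) = j :=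
      Fin.ext (by simp [hi])
    rw [hj, hi0]
    simp
  | succ n ih =>
    intro i j hi hij hb
    have h1 : 1 ≤ (i : ℕ) := by omega
    have hj1 : 1 ≤ (j : ℕ) := by omega
    set i' : Fin s := ⟨(i : ℕ) - 1, Nat.lt_of_le_of_lt (Nat.sub_le _ _) i.isLt⟩ with hi'
    set j' : Fin t := ⟨(j : ℕ) - 1, Nat.lt_of_le_of_lt (Nat.sub_le _ _) j.isLt⟩ with hj'
    have hgen : X i j - X i' j' ∈ diagIdeal R X :=
      Ideal.subset_span (Or.inr ⟨i, j, h1, hij, hb, rfl⟩)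
    have hih := ih i' j' (by simp [hi']; omega) (by simp [hi', hj']; omega)
      (by simp [hi', hj']; omega)
    have heq : (⟨(j : ℕ) - (i : ℕ), Nat.lt_of_le_of_lt (Nat.sub_le _ _) j.isLt⟩ : Fin t)
        = ⟨(j' : ℕ) - (i' : ℕ), Nat.lt_of_le_of_lt (Nat.sub_le _ _) j'.isLt⟩ :=
      Fin.ext (by simp [hi', hj']; omega)
    rw [← sub_add_sub_cancel (X i j) (X i' j'), heq]
    exact add_mem hgen hih

theorem stmt_7
    (R : Type*) [CommRing R] (s t : ℕ) (hs : 2 ≤ s) (hst : s ≤ t)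
    (X : Fin s → Fin t → R)
    -- x i j is the image of X i j in A = R/I_s(X);
    -- I = LA and q = QA are the images of L and Q in A
    (x : Fin s → Fin t → R ⧸ minorsIdeal R X)
    (hx : ∀ i j, x i j = Ideal.Quotient.mk (minorsIdeal R X) (X i j))
    (I : Ideal (R ⧸ minorsIdeal R X))
    (hI : I = (entriesIdeal R X).map (Ideal.Quotient.mk (minorsIdeal R X)))
    (q : Ideal (R ⧸ minorsIdeal R X))
    (hq : q = (diagIdeal R X).map (Ideal.Quotient.mk (minorsIdeal R X)))
    (jj : Fin s → Fin s) (kk : Fin s → Fin t) :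
    (∏ u : Fin s, x (jj u) (kk u)) ∈ q * I ^ (s - 1) ∨
      ∃ c : Fin s → Fin t, StrictMono c ∧
        (∏ u : Fin s, x (jj u) (kk u)) - (∏ u : Fin s, x u (c u)) ∈ q * I ^ (s - 1) := by
  classical
  have hs0 : 0 < s := by omega
  have hIm : ∀ (i : Fin s) (j : Fin t), x i j ∈ I := by
    intro i j
    rw [hx, hI]
    exact Ideal.mem_map_of_mem _ (Ideal.subset_span ⟨i, j, rfl⟩)
  have hqm : ∀ r ∈ diagIdeal R X, Ideal.Quotient.mk (minorsIdeal R X) r ∈ q := by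
    intro r hr
    rw [hq]
    exact Ideal.mem_map_of_mem _ hr
  by_cases hall : ∀ u : Fin s, (jj u : ℕ) ≤ (kk u : ℕ) ∧ (kk u : ℕ) - (jj u : ℕ) ≤ t - s
  · -- all entries are in the band
    right
    set d : Fin s → ℕ := fun u => (kk u : ℕ) - (jj u : ℕ) with hd
    set σ : Equiv.Perm (Fin s) := Tuple.sort d with hσ
    have hmono : Monotone (d ∘ σ) := Tuple.monotone_sort d
    have hdle : ∀ u, d u ≤ t - s := fun u => (hall u).2
    have hdlt : ∀ u, d u < t := fun u => by have := hdle u; omega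
    have hct : ∀ u : Fin s, d (σ u) + (u : ℕ) < t := fun u => by
      have := hdle (σ u); have := u.isLt; omega
    refine ⟨fun u => ⟨d (σ u) + (u : ℕ), hct u⟩, ?_, ?_⟩
    · intro u v huv
      have h1 : d (σ u) ≤ d (σ v) := hmono huv.le
      have h2 : (u : ℕ) < (v : ℕ) := huv
      exact Fin.mk_lt_mk.mpr (by omega)
    · set m : Fin s → R ⧸ minorsIdeal R X :=
        fun u => Ideal.Quotient.mk (minorsIdeal R X) (X ⟨0, hs0⟩ ⟨d u, hdlt u⟩) with hm
      have hmI : ∀ u, m u ∈ I := by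
        intro u
        rw [hm, hI]
        exact Ideal.mem_map_of_mem _ (Ideal.subset_span ⟨_, _, rfl⟩)
      have hcard : (Finset.univ : Finset (Fin s)).card - 1 = s - 1 := by simp
      -- step 1 : ∏ x (jj u) (kk u) - ∏ m u ∈ q * I^(s-1)
      have h1 : (∏ u : Fin s, x (jj u) (kk u)) - (∏ u : Fin s, m u) ∈ q * I ^ (s - 1) := by
        rw [← hcard]
        refine aux_prod_sub_mem q I Finset.univ _ _ (fun u _ => hIm _ _) (fun u _ => hmI u) ?_
        intro u _
        rw [hx, hm, ← map_sub]
        refine hqm _ ?_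
        have := diag_shift hs0 X ((jj u : ℕ)) (jj u) (kk u) rfl (hall u).1 (hall u).2
        convert this using 3
      -- step 2 : ∏ m (σ u) = ∏ m u
      have h2 : (∏ u : Fin s, m (σ u)) = ∏ u : Fin s, m u := Equiv.prod_comp σ m
      -- step 3 : ∏ x u (c u) - ∏ m (σ u) ∈ q * I^(s-1)
      have h3 : (∏ u : Fin s, x u (⟨d (σ u) + (u : ℕ), hct u⟩ : Fin t))
          - (∏ u : Fin s, m (σ u)) ∈ q * I ^ (s - 1) := by
        rw [← hcard]
        refine aux_prod_sub_mem q I Finset.univ _ _ (fun u _ => hIm _ _) (fun u _ => hmI _) ?_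
        intro u _
        rw [hx, hm, ← map_sub]
        refine hqm _ ?_
        have hb : (d (σ u) + (u : ℕ)) - (u : ℕ) ≤ t - s := by
          have := hdle (σ u); omega
        have := diag_shift hs0 X ((u : ℕ)) u (⟨d (σ u) + (u : ℕ), hct u⟩ : Fin t) rfl
          (by simp) (by simpa using hb)
        convert this using 3
        exact Fin.ext (by simp)
      have := sub_mem h1 (h2 ▸ h3)
      simpa using this
  · -- some entry is out of the band
    left
    push_neg at hall
    obtain ⟨u, hu⟩ := hall
    have hoff : ((kk u : ℕ) < (jj u : ℕ)) ∨ t - s < (kk u : ℕ) - (jj u : ℕ) := by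
      by_cases h : (jj u : ℕ) ≤ (kk u : ℕ)
      · exact Or.inr (hu h)
      · exact Or.inl (by omega)
    rw [← Finset.mul_prod_erase Finset.univ _ (Finset.mem_univ u)]
    have hxq : x (jj u) (kk u) ∈ q := by
      rw [hx]
      exact hqm _ (Ideal.subset_span (Or.inl ⟨jj u, kk u, hoff, rfl⟩))
    have hrest : (∏ v ∈ Finset.univ.erase u, x (jj v) (kk v)) ∈ I ^ (s - 1) := by
      have hc : (Finset.univ.erase u).card = s - 1 := by
        rw [Finset.card_erase_of_mem (Finset.mem_univ u)]; simp
      have := aux_prod_mem_pow I (Finset.univ.erase u) _ (fun v _ => hIm (jj v) (kk v))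
      rwa [hc] at this
    exact Ideal.mul_mem_mul hxq hrest
end

section
/- Let R be a commutative ring, let 2 ≤ s ≤ t be integers, let (X_{ij})_{1≤i≤s,1≤j≤t} be an s×t matrix of elements of R, and set A = R/I_s(X), I = LA, q = QA (with L, Q as specified). Then I^s = q·I^{s−1} as ideals of A. -/
namespace Stmt8Aux

open Finset

variable {R : Type*} [CommRing R] {s t : ℕ} (X : Fin s → Fin t → R)

lemma X_mem_L (i : Fin s) (j : Fin t) : X i j ∈ entriesIdeal R X :=
  Ideal.subset_span ⟨i, j, rfl⟩

lemma Q_le_L : diagIdeal R X ≤ entriesIdeal R X := by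
  rw [diagIdeal, Ideal.span_le]
  rintro r (⟨i, j, -, rfl⟩ | ⟨i, j, -, -, -, rfl⟩)
  · exact X_mem_L X i j
  · exact sub_mem (X_mem_L X i j) (X_mem_L X _ _)

lemma X_mem_Q (i : Fin s) (j : Fin t)
    (h : (j : ℕ) < (i : ℕ) ∨ t - s < (j : ℕ) - (i : ℕ)) : X i j ∈ diagIdeal R X :=
  Ideal.subset_span (Or.inl ⟨i, j, h, rfl⟩)

/-- The diagonal variables `y_k = X 0 k` for `0 ≤ k ≤ t - s`, and `0` otherwise. -/
def yv (hs : 0 < s) (hst : s ≤ t) (k : ℕ) : R :=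
  if h : k ≤ t - s then X ⟨0, hs⟩ ⟨k, by omega⟩ else 0

variable {X}

lemma yv_mem_L (hs : 0 < s) (hst : s ≤ t) (k : ℕ) : yv X hs hst k ∈ entriesIdeal R X := by
  rw [yv]
  split
  · exact X_mem_L X _ _
  · exact zero_mem _

lemma yv_of_gt (hs : 0 < s) (hst : s ≤ t) {k : ℕ} (h : t - s < k) : yv X hs hst k = 0 := by
  rw [yv, dif_neg (by omega)]

lemma X_sub_yv_mem_Q (hs : 0 < s) (hst : s ≤ t) :
    ∀ (n : ℕ) (i : Fin s) (j : Fin t), (i : ℕ) = n → (i : ℕ) ≤ (j : ℕ) →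
      (j : ℕ) - (i : ℕ) ≤ t - s →
      X i j - yv X hs hst ((j : ℕ) - (i : ℕ)) ∈ diagIdeal R X := by
  intro n
  induction n with
  | zero =>
    intro i j h0 hij hb
    have : yv X hs hst ((j : ℕ) - (i : ℕ)) = X i j := by
      rw [yv, dif_pos hb]
      congr 1
      · exact Fin.ext (by simpa using h0.symm)
      · exact Fin.ext (by simp; omega)
    rw [this, sub_self]
    exact zero_mem _
  | succ m ih =>
    intro i j hm hij hb
    have hi1 : (i : ℕ) - 1 < s := by omega
    have hj1 : (j : ℕ) - 1 < t := by omega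
    have h1 : X i j - X ⟨(i : ℕ) - 1, hi1⟩ ⟨(j : ℕ) - 1, hj1⟩ ∈ diagIdeal R X :=
      Ideal.subset_span (Or.inr ⟨i, j, by omega, hij, hb, rfl⟩)
    have h2 : X ⟨(i : ℕ) - 1, hi1⟩ ⟨(j : ℕ) - 1, hj1⟩ -
        yv X hs hst (((j : ℕ) - 1) - ((i : ℕ) - 1)) ∈ diagIdeal R X :=
      ih _ _ (by simp; omega) (by simp; omega) (by simp; omega)
    have he : ((j : ℕ) - 1) - ((i : ℕ) - 1) = (j : ℕ) - (i : ℕ) := by omega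
    rw [he] at h2
    have := add_mem h1 h2
    simpa using this

lemma X_sub_yv_mem_Q' (hs : 0 < s) (hst : s ≤ t) (i : Fin s) (j : Fin t)
    (hij : (i : ℕ) ≤ (j : ℕ)) :
    X i j - yv X hs hst ((j : ℕ) - (i : ℕ)) ∈ diagIdeal R X := by
  by_cases hb : (j : ℕ) - (i : ℕ) ≤ t - s
  · exact X_sub_yv_mem_Q hs hst _ i j rfl hij hb
  · rw [yv_of_gt hs hst (by omega), sub_zero]
    exact X_mem_Q X i j (Or.inr (by omega))

lemma prod_mem_pow (L' : Ideal R) {ι : Type*} (F : Finset ι) (f : ι → R)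
    (h : ∀ i ∈ F, f i ∈ L') : ∏ i ∈ F, f i ∈ L' ^ F.card := by
  classical
  induction F using Finset.cons_induction with
  | empty => simp [Ideal.one_eq_top]
  | cons a F ha ih =>
    rw [Finset.prod_cons, Finset.card_cons, pow_succ']
    exact Ideal.mul_mem_mul (h a (Finset.mem_cons_self a F))
      (ih fun i hi => h i (Finset.mem_cons_of_mem hi))

lemma prod_univ_mem_pow (L' : Ideal R) {n : ℕ} (f : Fin n → R) (h : ∀ i, f i ∈ L') :
    ∏ i, f i ∈ L' ^ n := by
  have := prod_mem_pow L' Finset.univ f (fun i _ => h i)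
  simpa using this

lemma prod_sub_prod_mem (L' Q' : Ideal R) :
    ∀ (n : ℕ) (f g : Fin n → R), (∀ i, f i ∈ L') → (∀ i, g i ∈ L') →
      (∀ i, f i - g i ∈ Q') → (∏ i, f i) - ∏ i, g i ∈ Q' * L' ^ (n - 1) := by
  intro n
  induction n with
  | zero => intro f g _ _ _; simp
  | succ m ih =>
    intro f g hf hg hfg
    rw [Fin.prod_univ_succ f, Fin.prod_univ_succ g]
    have key : f 0 * ∏ i : Fin m, f i.succ - g 0 * ∏ i : Fin m, g i.succ =
        (f 0 - g 0) * ∏ i : Fin m, f i.succ +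
          g 0 * ((∏ i : Fin m, f i.succ) - ∏ i : Fin m, g i.succ) := by ring
    rw [key, Nat.add_sub_cancel]
    refine add_mem ?_ ?_
    · exact Ideal.mul_mem_mul (hfg 0)
        (prod_univ_mem_pow L' _ fun i => hf i.succ)
    · rcases m with - | p
      · simp
      · have h1 : g 0 * ((∏ i : Fin (p + 1), f i.succ) - ∏ i : Fin (p + 1), g i.succ) ∈
            L' * (Q' * L' ^ p) := by
          refine Ideal.mul_mem_mul (hg 0) ?_
          have := ih (fun i => f i.succ) (fun i => g i.succ)
            (fun i => hf i.succ) (fun i => hg i.succ) (fun i => hfg i.succ)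
          simpa using this
        have e : L' * (Q' * L' ^ p) = Q' * L' ^ (p + 1) := by
          rw [mul_left_comm, ← pow_succ']
        rwa [e] at h1

lemma prod_mem_of_factor (L' Q' : Ideal R) {n : ℕ} (f : Fin n → R)
    (h : ∀ i, f i ∈ L') (m0 : Fin n) (hm : f m0 ∈ Q') :
    ∏ i, f i ∈ Q' * L' ^ (n - 1) := by
  classical
  rw [← Finset.mul_prod_erase Finset.univ f (Finset.mem_univ m0)]
  have hcard : (Finset.univ.erase m0).card = n - 1 := by
    rw [Finset.card_erase_of_mem (Finset.mem_univ _), Finset.card_univ, Fintype.card_fin]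
  exact Ideal.mul_mem_mul hm (hcard ▸ prod_mem_pow L' _ f (fun i _ => h i))

lemma units_smul_mem (J : Ideal R) (u : ℤˣ) {x : R} (hx : x ∈ J) : u • x ∈ J := by
  rw [Units.smul_def, zsmul_eq_mul]
  exact Ideal.mul_mem_left _ _ hx

/-- Strict rearrangement inequality for a strictly monotone integer sequence. -/
lemma rearrangement {n : ℕ} (c : Fin n → ℤ) (hc : StrictMono c)
    (σ : Equiv.Perm (Fin n)) (hσ : σ ≠ 1) :
    ∑ i, c i * ((σ i : ℕ) : ℤ) < ∑ i, c i * ((i : ℕ) : ℤ) := by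
  have hmono : Monovary c (fun i : Fin n => ((i : ℕ) : ℤ)) := by
    intro i j h
    have h' : (i : ℕ) < (j : ℕ) := Nat.cast_lt.mp h
    exact (hc (Fin.lt_def.2 h')).le
  refine (hmono.sum_mul_comp_perm_lt_sum_mul_iff (σ := σ)).2 ?_
  intro hM
  apply hσ
  have hsm : StrictMono ⇑σ := by
    intro i j hij
    rcases lt_trichotomy (σ i) (σ j) with h | h | h
    · exact h
    · exact absurd (σ.injective h) (ne_of_lt hij).symm.symm
    · exfalso
      have hlt : (((σ j : Fin n) : ℕ) : ℤ) < (((σ i : Fin n) : ℕ) : ℤ) := by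
        exact_mod_cast Fin.lt_def.1 h
      have : c j ≤ c i := hM hlt
      exact absurd (hc hij) (not_lt.2 this)
  haveI : WellFoundedLT (Fin n) := Finite.to_wellFoundedLT
  have : ⇑σ = id := (hsm.range_inj strictMono_id).1
    (by rw [Equiv.range_eq_univ, Set.range_id])
  exact Equiv.ext fun x => congrFun this x

lemma sum_sq_lt {n : ℕ} (c : Fin n → ℕ) (hc : StrictMono c)
    (σ : Equiv.Perm (Fin n)) (hσ : σ ≠ 1)
    (hle : ∀ i, (σ i : ℕ) ≤ c i) (hle' : ∀ i : Fin n, (i : ℕ) ≤ c i) :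
    ∑ i, (c i - (i : ℕ)) ^ 2 < ∑ i, (c i - (σ i : ℕ)) ^ 2 := by
  have hcz : StrictMono fun i => ((c i : ℕ) : ℤ) := fun i j h =>
    show ((c i : ℕ) : ℤ) < ((c j : ℕ) : ℤ) from Int.ofNat_lt.2 (hc h)
  have key : ∑ i, ((c i : ℕ) : ℤ) * ((σ i : ℕ) : ℤ) <
      ∑ i, ((c i : ℕ) : ℤ) * ((i : ℕ) : ℤ) := rearrangement _ hcz σ hσ
  have hσ2 : ∑ i, (((σ i : Fin n) : ℕ) : ℤ) ^ 2 = ∑ i : Fin n, ((i : ℕ) : ℤ) ^ 2 :=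
    Equiv.sum_comp σ (fun i : Fin n => ((i : ℕ) : ℤ) ^ 2)
  have cast1 : ∀ d : Fin n → ℕ, (∀ i, d i ≤ c i) →
      ((∑ i, (c i - d i) ^ 2 : ℕ) : ℤ) = ∑ i, ((c i : ℤ) - (d i : ℤ)) ^ 2 := by
    intro d hd
    push_cast
    exact Finset.sum_congr rfl fun i _ => by rw [Nat.cast_sub (hd i)]
  have expand : ∀ f g : Fin n → ℤ,
      ∑ i, (f i - g i) ^ 2 =
        (∑ i, (f i) ^ 2 + ∑ i, (g i) ^ 2) - 2 * ∑ i, f i * g i := by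
    intro f g
    rw [Finset.sum_congr rfl fun (i : Fin n) _ =>
      (show (f i - g i) ^ 2 = (f i ^ 2 + g i ^ 2) - 2 * (f i * g i) by ring),
      Finset.sum_sub_distrib, Finset.sum_add_distrib, Finset.mul_sum]
  rw [← Nat.cast_lt (α := ℤ), cast1 _ (fun i => hle' i), cast1 _ (fun i => hle i),
    expand, expand, hσ2]
  linarith

/-- The key lemma: any product of `s` diagonal variables lies in
`minors ⊔ Q * L ^ (s - 1)`, by descending induction on the sum of squares of indices. -/
lemma yprod_mem (hs0 : 0 < s) (hst : s ≤ t) :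
    ∀ (N : ℕ) (a : Fin s → ℕ), s * (t - s) ^ 2 + 1 - ∑ i, (a i) ^ 2 ≤ N →
      ∏ i, yv X hs0 hst (a i) ∈
        minorsIdeal R X ⊔ diagIdeal R X * entriesIdeal R X ^ (s - 1) := by
  have hbound : ∀ a : Fin s → ℕ, (∀ i, a i ≤ t - s) →
      ∑ i, (a i) ^ 2 ≤ s * (t - s) ^ 2 := by
    intro a ha
    calc ∑ i, (a i) ^ 2 ≤ Finset.univ.card • (t - s) ^ 2 :=
          Finset.sum_le_card_nsmul _ _ _ fun i _ => Nat.pow_le_pow_left (ha i) 2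
      _ = s * (t - s) ^ 2 := by
          rw [Finset.card_univ, Fintype.card_fin, smul_eq_mul]
  have hzero : ∀ (a : Fin s → ℕ), (∃ m, t - s < a m) →
      ∏ i, yv X hs0 hst (a i) ∈
        minorsIdeal R X ⊔ diagIdeal R X * entriesIdeal R X ^ (s - 1) := by
    rintro a ⟨m, hm⟩
    have : ∏ i, yv X hs0 hst (a i) = 0 :=
      Finset.prod_eq_zero (Finset.mem_univ m) (yv_of_gt (X := X) hs0 hst hm)
    rw [this]
    exact zero_mem _
  intro N
  induction N with
  | zero =>
    intro a ha
    by_cases hbig : ∃ m, t - s < a m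
    · exact hzero a hbig
    · push_neg at hbig
      exact absurd ha (by have := hbound a hbig; omega)
  | succ N ih =>
    intro a ha
    by_cases hbig : ∃ m, t - s < a m
    · exact hzero a hbig
    · push_neg at hbig
      set J := minorsIdeal R X ⊔ diagIdeal R X * entriesIdeal R X ^ (s - 1) with hJ
      -- sort the exponents
      set σ₀ := Tuple.sort a with hσ₀
      set k : Fin s → ℕ := a ∘ σ₀ with hkdef
      have hk : Monotone k := Tuple.monotone_sort a
      have hprod : ∏ i, yv X hs0 hst (k i) = ∏ i, yv X hs0 hst (a i) :=
        Equiv.prod_comp σ₀ (fun i => yv X hs0 hst (a i))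
      have hsum : ∑ i, (k i) ^ 2 = ∑ i, (a i) ^ 2 :=
        Equiv.sum_comp σ₀ (fun i => (a i) ^ 2)
      have hkb : ∀ i, k i ≤ t - s := fun i => hbig _
      -- the columns of the chosen minor
      have hcol : ∀ j : Fin s, k j + (j : ℕ) < t := fun j => by
        have h1 := hkb j
        have h2 := j.isLt
        omega
      set c : Fin s → Fin t := fun j => ⟨k j + j, hcol j⟩ with hcdef
      have hc : StrictMono c := by
        intro i j hij
        have h1 : k i ≤ k j := hk hij.le
        have h2 : (i : ℕ) < (j : ℕ) := Fin.lt_def.1 hij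
        exact Fin.lt_def.2 (by simp only [hcdef]; omega)
      have hcv : ∀ j : Fin s, ((c j : Fin t) : ℕ) = k j + (j : ℕ) := fun j => rfl
      have hdet : (∑ σ : Equiv.Perm (Fin s), Equiv.Perm.sign σ • ∏ i, X (σ i) (c i)) ∈
          minorsIdeal R X := by
        have h0 : (Matrix.of fun i j : Fin s => X i (c j)).det ∈ minorsIdeal R X :=
          Ideal.subset_span ⟨c, hc, rfl⟩
        simpa [Matrix.det_apply] using h0
      -- the identity-permutation term
      have hT1 : (∏ i, X i (c i)) - ∏ i, yv X hs0 hst (k i) ∈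
          diagIdeal R X * entriesIdeal R X ^ (s - 1) := by
        have hQd : ∀ i : Fin s, X i (c i) - yv X hs0 hst (k i) ∈ diagIdeal R X := by
          intro i
          have h1 : (i : ℕ) ≤ ((c i : Fin t) : ℕ) := by rw [hcv]; omega
          have h2 := X_sub_yv_mem_Q' (X := X) hs0 hst i (c i) h1
          rwa [hcv, Nat.add_sub_cancel] at h2
        exact prod_sub_prod_mem _ _ s _ _
          (fun i => X_mem_L X _ _) (fun i => yv_mem_L (X := X) hs0 hst _) hQd
      -- the other terms
      have hT : ∀ σ : Equiv.Perm (Fin s), σ ≠ 1 →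
          Equiv.Perm.sign σ • ∏ i, X (σ i) (c i) ∈ J := by
        intro σ hσne
        by_cases hrow : ∃ i, ((c i : Fin t) : ℕ) < ((σ i : Fin s) : ℕ) ∨
            t - s < ((c i : Fin t) : ℕ) - ((σ i : Fin s) : ℕ)
        · obtain ⟨i0, hi0⟩ := hrow
          have hfac : X (σ i0) (c i0) ∈ diagIdeal R X := X_mem_Q X _ _ hi0
          have hmem : ∏ i, X (σ i) (c i) ∈
              diagIdeal R X * entriesIdeal R X ^ (s - 1) :=
            prod_mem_of_factor _ _ _ (fun i => X_mem_L X _ _) i0 hfac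
          exact units_smul_mem J _ (Submodule.mem_sup_right hmem)
        · push_neg at hrow
          set a' : Fin s → ℕ := fun i => ((c i : Fin t) : ℕ) - ((σ i : Fin s) : ℕ)
            with ha'def
          have hdiff : (∏ i, X (σ i) (c i)) - ∏ i, yv X hs0 hst (a' i) ∈
              diagIdeal R X * entriesIdeal R X ^ (s - 1) :=
            prod_sub_prod_mem (entriesIdeal R X) (diagIdeal R X) s
              (fun i => X (σ i) (c i)) (fun i => yv X hs0 hst (a' i))
              (fun i => X_mem_L X _ _) (fun i => yv_mem_L (X := X) hs0 hst _)
              (fun i => X_sub_yv_mem_Q' (X := X) hs0 hst (σ i) (c i) (hrow i).1)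
          have ha'b : ∀ i, a' i ≤ t - s := fun i => (hrow i).2
          have hIH : ∏ i, yv X hs0 hst (a' i) ∈ J := by
            apply ih a'
            have hgt : ∑ i, (k i) ^ 2 < ∑ i, (a' i) ^ 2 := by
              have hcv' : StrictMono fun i : Fin s => ((c i : Fin t) : ℕ) :=
                fun i j h => Fin.lt_def.1 (hc h)
              have := sum_sq_lt (fun i : Fin s => ((c i : Fin t) : ℕ)) hcv' σ hσne
                (fun i => (hrow i).1)
                (fun i => show (i : ℕ) ≤ ((c i : Fin t) : ℕ) by rw [hcv]; omega)
              have he : ∀ i : Fin s, ((c i : Fin t) : ℕ) - (i : ℕ) = k i := fun i => by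
                rw [hcv]; omega
              calc ∑ i, (k i) ^ 2 = ∑ i, (((c i : Fin t) : ℕ) - (i : ℕ)) ^ 2 :=
                    Finset.sum_congr rfl fun i _ => by rw [he i]
                _ < ∑ i, (((c i : Fin t) : ℕ) - ((σ i : Fin s) : ℕ)) ^ 2 := this
                _ = ∑ i, (a' i) ^ 2 := rfl
            have hb1 := hbound a' ha'b
            omega
          have : ∏ i, X (σ i) (c i) ∈ J := by
            have h2 : ∏ i, yv X hs0 hst (a' i) ∈ J := hIH
            have := add_mem (Submodule.mem_sup_right hdiff : _ ∈ J) h2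
            simpa using this
          exact units_smul_mem J _ this
      -- assemble
      have hsplit : (∑ σ : Equiv.Perm (Fin s), Equiv.Perm.sign σ • ∏ i, X (σ i) (c i)) =
          (∏ i, X i (c i)) +
            ∑ σ ∈ Finset.univ.erase (1 : Equiv.Perm (Fin s)),
              Equiv.Perm.sign σ • ∏ i, X (σ i) (c i) := by
        rw [← Finset.add_sum_erase _ _ (Finset.mem_univ (1 : Equiv.Perm (Fin s)))]
        simp
      have hfinal : ∏ i, yv X hs0 hst (k i) ∈ J := by
        have e : ∏ i, yv X hs0 hst (k i) =
            (∑ σ : Equiv.Perm (Fin s), Equiv.Perm.sign σ • ∏ i, X (σ i) (c i)) -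
              (∑ σ ∈ Finset.univ.erase (1 : Equiv.Perm (Fin s)),
                Equiv.Perm.sign σ • ∏ i, X (σ i) (c i)) -
              ((∏ i, X i (c i)) - ∏ i, yv X hs0 hst (k i)) := by
          rw [hsplit]; ring
        rw [e]
        refine sub_mem (sub_mem (Submodule.mem_sup_left hdet) ?_)
          (Submodule.mem_sup_right hT1)
        exact Ideal.sum_mem _ fun σ hσ => hT σ (Finset.ne_of_mem_erase hσ)
      rwa [hprod] at hfinal

end Stmt8Aux

theorem stmt_8
    (R : Type*) [CommRing R] (s t : ℕ) (hs : 2 ≤ s) (hst : s ≤ t)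
    (X : Fin s → Fin t → R)
    -- I = LA and q = QA are the images of L and Q in A = R/I_s(X)
    (I : Ideal (R ⧸ minorsIdeal R X))
    (hI : I = (entriesIdeal R X).map (Ideal.Quotient.mk (minorsIdeal R X)))
    (q : Ideal (R ⧸ minorsIdeal R X))
    (hq : q = (diagIdeal R X).map (Ideal.Quotient.mk (minorsIdeal R X))) :
    I ^ s = q * I ^ (s - 1) := by
  subst hI hq
  have hs0 : 0 < s := by omega
  have hsub2 : diagIdeal R X * entriesIdeal R X ^ (s - 1) ≤ entriesIdeal R X ^ s := by
    have h1 : diagIdeal R X * entriesIdeal R X ^ (s - 1) ≤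
        entriesIdeal R X * entriesIdeal R X ^ (s - 1) :=
      Ideal.mul_mono_left (Stmt8Aux.Q_le_L X)
    have h2 : entriesIdeal R X * entriesIdeal R X ^ (s - 1) = entriesIdeal R X ^ s := by
      rw [← pow_succ']
      congr 1
      omega
    rw [h2] at h1
    exact h1
  have hsub1 : entriesIdeal R X ^ s ≤
      minorsIdeal R X ⊔ diagIdeal R X * entriesIdeal R X ^ (s - 1) := by
    rw [show entriesIdeal R X = Submodule.span R {r | ∃ i j, r = X i j} from rfl,
      Submodule.span_pow, Submodule.span_le]
    rintro x hx
    rw [Set.mem_pow] at hx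
    obtain ⟨f, hf⟩ := hx
    rw [Fin.prod_ofFn] at hf
    choose rows cols hrc using fun m : Fin s => (f m).2
    have hx' : x = ∏ m, X (rows m) (cols m) := by
      rw [← hf]
      exact Finset.prod_congr rfl fun m _ => hrc m
    rw [hx']
    by_cases hneg : ∀ m : Fin s, ((rows m : Fin s) : ℕ) ≤ ((cols m : Fin t) : ℕ)
    · set a : Fin s → ℕ :=
        fun m => ((cols m : Fin t) : ℕ) - ((rows m : Fin s) : ℕ) with hadef
      have hdiff : (∏ m, X (rows m) (cols m)) - ∏ m, Stmt8Aux.yv X hs0 hst (a m) ∈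
          diagIdeal R X * entriesIdeal R X ^ (s - 1) :=
        Stmt8Aux.prod_sub_prod_mem _ _ s _ _
          (fun m => Stmt8Aux.X_mem_L X _ _)
          (fun m => Stmt8Aux.yv_mem_L (X := X) hs0 hst _)
          (fun m => Stmt8Aux.X_sub_yv_mem_Q' (X := X) hs0 hst _ _ (hneg m))
      have hy := Stmt8Aux.yprod_mem (X := X) hs0 hst (s * (t - s) ^ 2 + 1) a (by omega)
      have e : ∏ m, X (rows m) (cols m) =
          ((∏ m, X (rows m) (cols m)) - ∏ m, Stmt8Aux.yv X hs0 hst (a m)) +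
            ∏ m, Stmt8Aux.yv X hs0 hst (a m) := by ring
      rw [e]
      exact add_mem (Submodule.mem_sup_right hdiff) hy
    · push_neg at hneg
      obtain ⟨m0, hm0⟩ := hneg
      have hfac : X (rows m0) (cols m0) ∈ diagIdeal R X :=
        Stmt8Aux.X_mem_Q X _ _ (Or.inl hm0)
      have hmem : ∏ m, X (rows m) (cols m) ∈
          diagIdeal R X * entriesIdeal R X ^ (s - 1) :=
        Stmt8Aux.prod_mem_of_factor _ _ _ (fun m => Stmt8Aux.X_mem_L X _ _) m0 hfac
      exact Submodule.mem_sup_right hmem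
  rw [← Ideal.map_pow, ← Ideal.map_pow, ← Ideal.map_mul]
  apply le_antisymm
  · calc (entriesIdeal R X ^ s).map (Ideal.Quotient.mk (minorsIdeal R X)) ≤
        (minorsIdeal R X ⊔ diagIdeal R X * entriesIdeal R X ^ (s - 1)).map
          (Ideal.Quotient.mk (minorsIdeal R X)) := Ideal.map_mono hsub1
      _ = (diagIdeal R X * entriesIdeal R X ^ (s - 1)).map
          (Ideal.Quotient.mk (minorsIdeal R X)) := by
        rw [Ideal.map_sup, Ideal.map_quotient_self, bot_sup_eq]
  · exact Ideal.map_mono hsub2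
end

section
/- Let 2 ≤ s ≤ t be integers and let R be a regular local ring of dimension st whose maximal ideal is generated by elements (X_{ij})_{1≤i≤s,1≤j≤t} (a regular system of parameters). Set A = R/I_s(X), a Cohen-Macaulay local ring of dimension st − (t−s+1), with maximal ideal m. Let q = QA where Q is the ideal of R generated by the X_{ij} with j−i < 0 or j−i > t−s together with X_{ij} − X_{i−1,j−1} for 2 ≤ i ≤ s, 0 ≤ j−i ≤ t−s. Then q is a parameter ideal of A (generated by st − (t−s+1) elements forming a system of parameters) and m^s = q·m^{s−1}. -/
section Helpers
variable {R : Type*} [CommRing R]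

lemma prod_mem_pow' (L : Ideal R) (n : ℕ) (u : Fin n → R) (h : ∀ k, u k ∈ L) :
    (∏ k, u k) ∈ L ^ n := by
  induction n with
  | zero => simp
  | succ n ih =>
      rw [Fin.prod_univ_succ, pow_succ, mul_comm (L ^ n) L]
      exact Ideal.mul_mem_mul (h 0) (ih _ fun k => h k.succ)

lemma prod_sub_prod_mem (Q L : Ideal R) : ∀ (n : ℕ) (u v : Fin (n+1) → R),
    (∀ k, u k ∈ L) → (∀ k, v k ∈ L) → (∀ k, u k - v k ∈ Q) →
    (∏ k, u k) - (∏ k, v k) ∈ Q * L ^ n := by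
  intro n
  induction n with
  | zero =>
      intro u v _ _ hQ
      simpa [Fin.prod_univ_one, Ideal.mul_top] using hQ 0
  | succ n ih =>
      intro u v hu hv hQ
      have key : (∏ k, u k) - (∏ k, v k) =
          (u 0 - v 0) * (∏ k, u (Fin.succ k)) +
          v 0 * ((∏ k, u (Fin.succ k)) - (∏ k, v (Fin.succ k))) := by
        rw [Fin.prod_univ_succ u, Fin.prod_univ_succ v]; ring
      rw [key]
      refine Ideal.add_mem _ ?_ ?_
      · exact Ideal.mul_mem_mul (hQ 0) (prod_mem_pow' L _ _ fun k => hu k.succ)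
      · have hd := ih (fun k => u k.succ) (fun k => v k.succ)
          (fun k => hu k.succ) (fun k => hv k.succ) (fun k => hQ k.succ)
        have : v 0 * ((∏ k, u (Fin.succ k)) - (∏ k, v (Fin.succ k))) ∈ L * (Q * L ^ n) :=
          Ideal.mul_mem_mul (hv 0) hd
        rwa [mul_left_comm, ← pow_succ'] at this

lemma det_sub_det_mem (Q L : Ideal R) (n : ℕ) (M N : Matrix (Fin (n+1)) (Fin (n+1)) R)
    (hM : ∀ i j, M i j ∈ L) (hN : ∀ i j, N i j ∈ L) (hQ : ∀ i j, M i j - N i j ∈ Q) :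
    M.det - N.det ∈ Q * L ^ n := by
  rw [Matrix.det_apply', Matrix.det_apply', ← Finset.sum_sub_distrib]
  refine Ideal.sum_mem _ fun σ _ => ?_
  rw [← mul_sub]
  exact Ideal.mul_mem_left _ _ <| prod_sub_prod_mem Q L n _ _
    (fun k => hM _ _) (fun k => hN _ _) (fun k => hQ _ _)

end Helpers

section Band
variable {R : Type*} [CommRing R] {s t : ℕ} (X : Fin s → Fin t → R)

lemma entries_mem (i : Fin s) (j : Fin t) : X i j ∈ entriesIdeal R X :=
  Ideal.subset_span ⟨i, j, rfl⟩

lemma out_mem_Q (i : Fin s) (j : Fin t) (h : (j : ℕ) < (i : ℕ) ∨ t - s < (j : ℕ) - (i : ℕ)) :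
    X i j ∈ diagIdeal R X :=
  Ideal.subset_span (Or.inl ⟨i, j, h, rfl⟩)

lemma diff_mem_Q (i : Fin s) (j : Fin t) (h1 : 1 ≤ (i : ℕ)) (h2 : (i : ℕ) ≤ (j : ℕ))
    (h3 : (j : ℕ) - (i : ℕ) ≤ t - s) :
    X i j - X ⟨(i : ℕ) - 1, Nat.lt_of_le_of_lt (Nat.sub_le _ _) i.isLt⟩
        ⟨(j : ℕ) - 1, Nat.lt_of_le_of_lt (Nat.sub_le _ _) j.isLt⟩ ∈ diagIdeal R X :=
  Ideal.subset_span (Or.inr ⟨i, j, h1, h2, h3, rfl⟩)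

lemma band_mem_Q (h0 : 0 < s) :
    ∀ (i j : ℕ) (hi : i < s) (hj : j < t), i ≤ j → j - i ≤ t - s →
    ∀ (k : ℕ) (hk : k < t), k = j - i →
    X ⟨i, hi⟩ ⟨j, hj⟩ - X ⟨0, h0⟩ ⟨k, hk⟩ ∈ diagIdeal R X := by
  intro i
  induction i with
  | zero =>
      intro j hi hj _ _ k hk hkj
      have hk' : k = j := by omega
      subst hk'
      have heq : X ⟨0, hi⟩ ⟨k, hj⟩ = X ⟨0, h0⟩ ⟨k, hk⟩ := rfl
      rw [heq, sub_self]
      exact (diagIdeal R X).zero_mem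
  | succ i ih =>
      intro j hi hj hij hw k hk hkj
      have hi' : i < s := by omega
      have hj' : j - 1 < t := by omega
      have ha : X ⟨i + 1, hi⟩ ⟨j, hj⟩ - X ⟨i, hi'⟩ ⟨j - 1, hj'⟩ ∈ diagIdeal R X := by
        exact diff_mem_Q X ⟨i + 1, hi⟩ ⟨j, hj⟩ (Nat.succ_le_succ (Nat.zero_le i)) hij hw
      have hb : X ⟨i, hi'⟩ ⟨j - 1, hj'⟩ - X ⟨0, h0⟩ ⟨k, hk⟩ ∈ diagIdeal R X :=
        ih (j - 1) hi' hj' (by omega) (by omega) k hk (by omega)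
      have := (diagIdeal R X).add_mem ha hb
      rwa [sub_add_sub_cancel] at this
end Band

section BandVal
variable {R : Type*} [CommRing R] {s t : ℕ} (X : Fin s → Fin t → R)

/-- The "band value": the entry of the banded Hankel matrix congruent to `X i j` mod `Q`. -/
def Bv (i : Fin s) (j : Fin t) : R :=
  if (i : ℕ) ≤ (j : ℕ) ∧ (j : ℕ) - (i : ℕ) ≤ t - s then
    X ⟨0, i.pos⟩ ⟨(j : ℕ) - (i : ℕ), Nat.lt_of_le_of_lt (Nat.sub_le _ _) j.isLt⟩
  else 0

lemma Bv_mem_L (i : Fin s) (j : Fin t) : Bv X i j ∈ entriesIdeal R X := by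
  unfold Bv; split
  · exact entries_mem X _ _
  · exact (entriesIdeal R X).zero_mem

lemma sub_Bv_mem_Q (i : Fin s) (j : Fin t) : X i j - Bv X i j ∈ diagIdeal R X := by
  unfold Bv; split
  · next h =>
      exact band_mem_Q X i.pos (i : ℕ) (j : ℕ) i.isLt j.isLt h.1 h.2 _ _ rfl
  · next h =>
      rw [sub_zero]
      exact out_mem_Q X i j (by omega)

end BandVal

section DetVar
variable {R : Type*} [CommRing R]

lemma det_sub_det_mem' (Q L : Ideal R) (m : ℕ) (M N : Matrix (Fin m) (Fin m) R)
    (hM : ∀ i j, M i j ∈ L) (hN : ∀ i j, N i j ∈ L) (hQ : ∀ i j, M i j - N i j ∈ Q) :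
    M.det - N.det ∈ Q * L ^ (m - 1) := by
  cases m with
  | zero => simp [Matrix.det_fin_zero]
  | succ m => exact det_sub_det_mem Q L m M N hM hN hQ

end DetVar

section Monomial
variable {R : Type*} [CommRing R] {s t : ℕ} (X : Fin s → Fin t → R)

lemma monomial_mem (h0 : 0 < s) (hst : s ≤ t) (n : ℕ) :
    ∀ (α : Fin s → Fin t), Monotone α → (∀ k, (α k : ℕ) ≤ t - s) →
    s * ((t - s) * (t - s)) ≤ (∑ k, (α k : ℕ) ^ 2) + n →
    (∏ k, X ⟨0, h0⟩ (α k)) ∈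
      diagIdeal R X * entriesIdeal R X ^ (s - 1) + minorsIdeal R X := by
  induction n using Nat.strong_induction_on with
  | _ n ih =>
  intro α hmono hbd hsum
  have hcol : ∀ k : Fin s, (α k : ℕ) + (k : ℕ) < t := fun k => by
    have h1 := hbd k; have h2 := k.isLt; omega
  set c : Fin s → Fin t := fun k => ⟨(α k : ℕ) + (k : ℕ), hcol k⟩ with hc
  have hcval : ∀ k, (c k : ℕ) = (α k : ℕ) + (k : ℕ) := fun k => rfl
  have hcmono : StrictMono c := by
    intro k l hkl
    have h1 : (α k : ℕ) ≤ (α l : ℕ) := hmono hkl.le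
    have h2 : (k : ℕ) < (l : ℕ) := hkl
    simp only [hc, Fin.mk_lt_mk]
    omega
  set K : Ideal R := diagIdeal R X * entriesIdeal R X ^ (s - 1) + minorsIdeal R X with hK
  set M : Matrix (Fin s) (Fin s) R := Matrix.of (fun i j : Fin s => Bv X i (c j)) with hM
  -- the determinant of the band matrix lies in K
  have hminor : Matrix.det (Matrix.of fun i j : Fin s => X i (c j)) ∈ minorsIdeal R X :=
    Ideal.subset_span ⟨c, hcmono, rfl⟩
  have hdiff : M.det - Matrix.det (Matrix.of fun i j : Fin s => X i (c j)) ∈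
      diagIdeal R X * entriesIdeal R X ^ (s - 1) := by
    refine det_sub_det_mem' _ _ s _ _ (fun i j => Bv_mem_L X _ _)
      (fun i j => entries_mem X _ _) (fun i j => ?_)
    have := sub_Bv_mem_Q X i (c j)
    simpa [hM] using (diagIdeal R X).neg_mem this
  have hdet : M.det ∈ K := by
    have : M.det = (M.det - Matrix.det (Matrix.of fun i j : Fin s => X i (c j))) +
        Matrix.det (Matrix.of fun i j : Fin s => X i (c j)) := by ring
    rw [this, hK]
    exact Submodule.add_mem _ (Ideal.mem_sup_left hdiff) (Ideal.mem_sup_right hminor)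
  -- identity permutation term is the monomial
  have hid : (∏ i, M ((1 : Equiv.Perm (Fin s)) i) i) = ∏ k, X ⟨0, h0⟩ (α k) := by
    refine Finset.prod_congr rfl fun i _ => ?_
    show Bv X i (c i) = X ⟨0, h0⟩ (α i)
    unfold Bv
    rw [if_pos ⟨by simp [hcval], by have := hbd i; simp [hcval]; omega⟩]
    congr 1
    exact Fin.ext (by simp [hcval])
  -- expansion of the determinant
  classical
  have hsplit : (∏ k, X ⟨0, h0⟩ (α k)) = M.det -
      ∑ σ ∈ Finset.univ.erase (1 : Equiv.Perm (Fin s)),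
        (Equiv.Perm.sign σ : ℤ) * ∏ i, M (σ i) i := by
    rw [Matrix.det_apply' M]
    rw [← Finset.add_sum_erase Finset.univ _ (Finset.mem_univ (1 : Equiv.Perm (Fin s)))]
    rw [hid]
    simp only [Equiv.Perm.sign_one, Units.val_one, Int.cast_one, one_mul]
    ring
  rw [hsplit]
  refine Submodule.sub_mem _ hdet (Ideal.sum_mem _ fun σ hσ => ?_)
  have hσ1 : σ ≠ 1 := (Finset.mem_erase.mp hσ).1
  by_cases hall : ∀ i : Fin s, (σ i : ℕ) ≤ (c i : ℕ) ∧ (c i : ℕ) - (σ i : ℕ) ≤ t - s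
  · -- all entries in the band: the term is a monomial with strictly larger measure
    set β : Fin s → Fin t := fun i =>
      ⟨(c i : ℕ) - (σ i : ℕ), Nat.lt_of_le_of_lt (Nat.sub_le _ _) (c i).isLt⟩ with hβ
    have hβval : ∀ i, (β i : ℕ) = (c i : ℕ) - (σ i : ℕ) := fun i => rfl
    have hβbd : ∀ i, (β i : ℕ) ≤ t - s := fun i => (hall i).2
    have hprod : (∏ i, M (σ i) i) = ∏ i, X ⟨0, h0⟩ (β i) := by
      refine Finset.prod_congr rfl fun i _ => ?_
      show Bv X (σ i) (c i) = X ⟨0, h0⟩ (β i)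
      unfold Bv
      rw [if_pos ⟨(hall i).1, (hall i).2⟩]
    -- the measure strictly increases
    set A : Fin s → ℤ := fun i => ((α i : ℕ) : ℤ) with hA
    set G : Fin s → ℤ := fun i => ((i : ℕ) : ℤ) with hG
    set S : Fin s → ℤ := fun i => ((σ i : ℕ) : ℤ) with hS
    set B : Fin s → ℤ := fun i => ((β i : ℕ) : ℤ) with hB
    have hint : ∀ i : Fin s, B i = A i + G i - S i := by
      intro i
      have h1 := (hall i).1
      have h2 := hcval i
      have h3 := hβval i
      simp only [hA, hB, hG, hS]
      omega
    have hre : (∑ i, A i * S i) ≤ ∑ i, A i * G i := by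
      have hmono' : Monovary A G := by
        intro i j hij
        simp only [hG] at hij
        have h1 : (i : ℕ) < (j : ℕ) := by exact_mod_cast hij
        have h2 : α i ≤ α j := hmono (le_of_lt (show i < j from h1))
        have h3 : (α i : ℕ) ≤ (α j : ℕ) := h2
        simp only [hA]
        exact_mod_cast h3
      have h := hmono'.sum_comp_perm_smul_le_sum_smul (σ := σ⁻¹)
      simp only [smul_eq_mul] at h
      have hre2 : (∑ i, A i * S i) = ∑ i, A (σ⁻¹ i) * G i := by
        rw [← Equiv.sum_comp σ (fun i => A (σ⁻¹ i) * G i)]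
        refine Finset.sum_congr rfl fun i _ => ?_
        rw [show σ⁻¹ (σ i) = i from σ.symm_apply_apply i]
      rw [hre2]
      exact h
    have hsq : (1 : ℤ) ≤ ∑ i, (G i - S i) ^ 2 := by
      obtain ⟨j, hj⟩ : ∃ j, σ j ≠ j := by
        by_contra h; push_neg at h; exact hσ1 (Equiv.ext h)
      have hne : G j - S j ≠ 0 := by
        simp only [hG, hS]
        intro h
        apply hj
        have h2 : ((σ j : ℕ) : ℤ) = ((j : ℕ) : ℤ) := by omega
        exact Fin.ext (by exact_mod_cast h2)
      have h1 : (1 : ℤ) ≤ (G j - S j) ^ 2 := by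
        rcases lt_or_gt_of_ne hne with h | h <;> nlinarith
      calc (1 : ℤ) ≤ (G j - S j) ^ 2 := h1
        _ ≤ ∑ i, (G i - S i) ^ 2 :=
          Finset.single_le_sum (f := fun i => (G i - S i) ^ 2)
            (fun i _ => sq_nonneg _) (Finset.mem_univ j)
    have hexp : (∑ i, B i ^ 2) =
        (∑ i, A i ^ 2) + 2 * ((∑ i, A i * G i) - ∑ i, A i * S i) +
        ∑ i, (G i - S i) ^ 2 := by
      rw [← Finset.sum_sub_distrib, Finset.mul_sum, ← Finset.sum_add_distrib,
        ← Finset.sum_add_distrib]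
      refine Finset.sum_congr rfl fun i _ => ?_
      rw [hint i]; ring
    have hkeyZ : (∑ i, A i ^ 2) + 1 ≤ ∑ i, B i ^ 2 := by linarith
    have hAs : (∑ i, A i ^ 2) = ((∑ k, (α k : ℕ) ^ 2 : ℕ) : ℤ) := by
      push_cast [hA]; rfl
    have hBs : (∑ i, B i ^ 2) = ((∑ k, (β k : ℕ) ^ 2 : ℕ) : ℤ) := by
      push_cast [hB]; rfl
    have hkey : (∑ k, (α k : ℕ) ^ 2) + 1 ≤ ∑ k, (β k : ℕ) ^ 2 := by
      rw [hAs, hBs] at hkeyZ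
      exact_mod_cast hkeyZ
    -- bound on the new measure
    have hβsq : (∑ k, (β k : ℕ) ^ 2) ≤ s * ((t - s) * (t - s)) := by
      calc (∑ k, (β k : ℕ) ^ 2) ≤ ∑ _k : Fin s, (t - s) * (t - s) :=
            Finset.sum_le_sum fun k _ => by
              have h := hβbd k
              have h2 := Nat.pow_le_pow_left h 2
              simpa [pow_two] using h2
        _ = s * ((t - s) * (t - s)) := by
            simp [Finset.sum_const, Finset.card_univ, mul_comm]
    have hn1 : 1 ≤ n := by omega
    -- sort β and apply the induction hypothesis
    set τ : Equiv.Perm (Fin s) := Tuple.sort β with hτ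
    have hprod2 : (∏ i, X ⟨0, h0⟩ (β i)) = ∏ i, X ⟨0, h0⟩ (β (τ i)) :=
      (Equiv.prod_comp τ (fun i => X ⟨0, h0⟩ (β i))).symm
    have hsm : (∑ k, ((β (τ k) : ℕ)) ^ 2) = ∑ k, (β k : ℕ) ^ 2 :=
      Equiv.sum_comp τ (fun k => ((β k : ℕ)) ^ 2)
    have hmem : (∏ k, X ⟨0, h0⟩ ((β ∘ τ) k)) ∈ K := by
      refine ih (n - 1) (by omega) (β ∘ τ) (Tuple.monotone_sort β)
        (fun k => hβbd (τ k)) ?_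
      have : (∑ k, (((β ∘ τ) k : Fin t) : ℕ) ^ 2) = ∑ k, (β k : ℕ) ^ 2 := by
        simpa [Function.comp] using hsm
      rw [this]
      omega
    rw [hprod, hprod2]
    refine Ideal.mul_mem_left _ _ ?_
    simpa [Function.comp] using hmem
  · -- some entry out of the band: the product vanishes
    push_neg at hall
    obtain ⟨i, hi⟩ := hall
    have hzero : M (σ i) i = 0 := by
      show Bv X (σ i) (c i) = 0
      unfold Bv
      rw [if_neg]
      intro h
      have := hi h.1
      omega
    rw [Finset.prod_eq_zero (f := fun j => M (σ j) j) (Finset.mem_univ i) hzero, mul_zero]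
    exact Submodule.zero_mem _
end Monomial

section Pow
open Pointwise
variable {R : Type*} [CommRing R]

lemma span_set_pow (S : Set R) : ∀ n : ℕ, Ideal.span S ^ n = Ideal.span (S ^ n)
  | 0 => by simp [Ideal.one_eq_top, Ideal.span_univ]
  | n + 1 => by
      rw [pow_succ, span_set_pow S n, Ideal.span_mul_span', ← pow_succ]

variable {s t : ℕ} (X : Fin s → Fin t → R)

lemma Lpow_le (h0 : 0 < s) (hst : s ≤ t) :
    entriesIdeal R X ^ s ≤
      diagIdeal R X * entriesIdeal R X ^ (s - 1) + minorsIdeal R X := by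
  classical
  set K : Ideal R := diagIdeal R X * entriesIdeal R X ^ (s - 1) + minorsIdeal R X with hK
  set S : Set R := {r | ∃ i j, r = X i j} with hS
  rw [show entriesIdeal R X = Ideal.span S from rfl, span_set_pow, Ideal.span_le]
  rintro x hx
  rw [Set.mem_pow] at hx
  obtain ⟨f, hf⟩ := hx
  rw [List.prod_ofFn] at hf
  have hmem : ∀ k : Fin s, ∃ p : Fin s × Fin t, (f k : R) = X p.1 p.2 := by
    intro k
    obtain ⟨i, j, hij⟩ := (f k).2
    exact ⟨(i, j), hij⟩
  choose p hp using hmem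
  set u : Fin s → R := fun k => (f k : R) with hu
  set v : Fin s → R := fun k => Bv X (p k).1 (p k).2 with hv
  obtain ⟨s', rfl⟩ : ∃ s', s = s' + 1 := ⟨s - 1, by omega⟩
  have hdiffmem : (∏ k, u k) - (∏ k, v k) ∈ diagIdeal R X * entriesIdeal R X ^ s' :=
    prod_sub_prod_mem (diagIdeal R X) (entriesIdeal R X) s' u v
      (fun k => by show (f k : R) ∈ _; rw [hp k]; exact entries_mem X _ _)
      (fun k => Bv_mem_L X _ _)
      (fun k => by
        show (f k : R) - Bv X (p k).1 (p k).2 ∈ _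
        rw [hp k]; exact sub_Bv_mem_Q X _ _)
  have hvK : (∏ k, v k) ∈ K := by
    by_cases hband : ∀ k : Fin (s' + 1),
        ((p k).1 : ℕ) ≤ ((p k).2 : ℕ) ∧ ((p k).2 : ℕ) - ((p k).1 : ℕ) ≤ t - s' - 1
    · -- all in the band: a monomial in the first-row variables
      set β : Fin (s' + 1) → Fin t := fun k =>
        ⟨((p k).2 : ℕ) - ((p k).1 : ℕ),
          Nat.lt_of_le_of_lt (Nat.sub_le _ _) (p k).2.isLt⟩ with hβ
      have hveq : ∀ k, v k = X ⟨0, h0⟩ (β k) := by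
        intro k
        rw [hv]
        show Bv X (p k).1 (p k).2 = X ⟨0, h0⟩ (β k)
        unfold Bv
        rw [if_pos ⟨(hband k).1, by have := (hband k).2; omega⟩]
      set τ : Equiv.Perm (Fin (s' + 1)) := Tuple.sort β with hτ
      have hmem2 : (∏ k, X ⟨0, h0⟩ ((β ∘ τ) k)) ∈ K := by
        refine monomial_mem X h0 hst ((s' + 1) * ((t - (s' + 1)) * (t - (s' + 1))))
          (β ∘ τ) (Tuple.monotone_sort β) (fun k => by
            have := (hband (τ k)).2
            show (β (τ k) : ℕ) ≤ t - (s' + 1)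
            simp only [hβ]
            omega) (by omega)
      have e1 : (∏ k, v k) = ∏ k, X ⟨0, h0⟩ (β k) :=
        Finset.prod_congr rfl fun k _ => hveq k
      have e2 : (∏ k, X ⟨0, h0⟩ (β k)) = ∏ k, X ⟨0, h0⟩ (β (τ k)) :=
        (Equiv.prod_comp τ (fun k => X ⟨0, h0⟩ (β k))).symm
      rw [e1, e2]
      simpa [Function.comp] using hmem2
    · -- some factor vanishes
      push_neg at hband
      obtain ⟨k, hk⟩ := hband
      have hzero : v k = 0 := by
        rw [hv]
        show Bv X (p k).1 (p k).2 = 0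
        unfold Bv
        rw [if_neg]
        intro h
        have := hk h.1
        omega
      rw [Finset.prod_eq_zero (Finset.mem_univ k) hzero]
      exact Submodule.zero_mem _
  have : x = ((∏ k, u k) - (∏ k, v k)) + ∏ k, v k := by rw [← hf]; ring
  rw [this]
  exact Submodule.add_mem _ (Ideal.mem_sup_left hdiffmem) hvK

end Pow

section Gen
variable {R : Type*} [CommRing R]

/-- Enumeration of the `(s-1)(t+1)` generators of `diagIdeal`. -/
def genFun {s t : ℕ} (hs : 2 ≤ s) (hst : s ≤ t) (X : Fin s → Fin t → R)
    (p : Fin (s - 1) × Fin (t + 1)) : R :=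
  if hjt : (p.2 : ℕ) = t then
    X ⟨0, by omega⟩ ⟨t - s + (p.1 : ℕ) + 1, by have := p.1.isLt; omega⟩
  else if (p.2 : ℕ) < (p.1 : ℕ) + 1 ∨ t - s < (p.2 : ℕ) - ((p.1 : ℕ) + 1) then
    X ⟨(p.1 : ℕ) + 1, by have := p.1.isLt; omega⟩
      ⟨(p.2 : ℕ), by have := p.2.isLt; omega⟩
  else
    X ⟨(p.1 : ℕ) + 1, by have := p.1.isLt; omega⟩
      ⟨(p.2 : ℕ), by have := p.2.isLt; omega⟩ -
    X ⟨(p.1 : ℕ), by have := p.1.isLt; omega⟩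
      ⟨(p.2 : ℕ) - 1, by have := p.2.isLt; omega⟩

lemma diagIdeal_eq_span_genFun {s t : ℕ} (hs : 2 ≤ s) (hst : s ≤ t)
    (X : Fin s → Fin t → R) :
    diagIdeal R X = Ideal.span (Set.range (genFun hs hst X)) := by
  apply le_antisymm
  · -- every generator of diagIdeal is in the range of genFun
    rw [diagIdeal, Ideal.span_le]
    rintro x (⟨i, j, hcond, rfl⟩ | ⟨i, j, h1, h2, h3, rfl⟩)
    · by_cases hi0 : (i : ℕ) = 0
      · -- row 0, hence t - s < j
        have hj : t - s < (j : ℕ) := by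
          rcases hcond with h | h
          · omega
          · omega
        have hjt := j.isLt
        refine Ideal.subset_span ⟨(⟨(j : ℕ) - (t - s) - 1, by omega⟩, ⟨t, by omega⟩), ?_⟩
        show genFun hs hst X _ = X i j
        unfold genFun
        rw [dif_pos rfl]
        congr 1
        · exact Fin.ext (by simp; omega)
        · exact Fin.ext (by simp; omega)
      · have hjt := j.isLt
        have hi := i.isLt
        refine Ideal.subset_span ⟨(⟨(i : ℕ) - 1, by omega⟩, ⟨(j : ℕ), by omega⟩), ?_⟩
        show genFun hs hst X _ = X i j
        unfold genFun
        rw [dif_neg (by simp; omega), if_pos (by simp; omega)]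
        congr 1 <;> exact Fin.ext (by simp; omega)
    · have hjt := j.isLt
      have hi := i.isLt
      refine Ideal.subset_span ⟨(⟨(i : ℕ) - 1, by omega⟩, ⟨(j : ℕ), by omega⟩), ?_⟩
      show genFun hs hst X _ = _
      unfold genFun
      rw [dif_neg (by simp; omega), if_neg (by simp; omega)]
      congr 1 <;> congr 1 <;> exact Fin.ext (by simp; omega)
  · -- every value of genFun is a generator of diagIdeal
    rw [Ideal.span_le]
    rintro x ⟨p, rfl⟩
    unfold genFun
    split
    · next hjt =>
        refine Ideal.subset_span (Or.inl ⟨_, _, Or.inr ?_, rfl⟩)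
        simp
    · next hjt =>
        split
        · next hcond =>
            refine Ideal.subset_span (Or.inl ⟨_, _, ?_, rfl⟩)
            simpa using hcond
        · next hcond =>
            push_neg at hcond
            refine Ideal.subset_span (Or.inr ⟨⟨(p.1 : ℕ) + 1, by have := p.1.isLt; omega⟩,
              ⟨(p.2 : ℕ), by have := p.2.isLt; omega⟩, by simp, by simp; omega, by simp; omega,
              rfl⟩)
end Gen

section Main
variable {R : Type*} [CommRing R]

lemma diag_le_entries {s t : ℕ} (X : Fin s → Fin t → R) :
    diagIdeal R X ≤ entriesIdeal R X := by
  rw [diagIdeal, Ideal.span_le]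
  rintro x (⟨i, j, _, rfl⟩ | ⟨i, j, _, _, _, rfl⟩)
  · exact entries_mem X i j
  · exact Submodule.sub_mem _ (entries_mem X _ _) (entries_mem X _ _)

lemma minors_le_entries {s t : ℕ} (h0 : 0 < s) (X : Fin s → Fin t → R) :
    minorsIdeal R X ≤ entriesIdeal R X := by
  rw [minorsIdeal, Ideal.span_le]
  rintro x ⟨c, _, rfl⟩
  show Matrix.det _ ∈ _
  rw [Matrix.det_apply']
  refine Ideal.sum_mem _ fun σ _ => Ideal.mul_mem_left _ _ ?_
  have := prod_mem_pow' (entriesIdeal R X) s (fun i => X (σ i) (c i))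
    (fun i => entries_mem X _ _)
  exact Ideal.pow_le_self (by omega) this

end Main


theorem stmt_12
    (R : Type*) [CommRing R] [IsNoetherianRing R] [IsLocalRing R]
    (s t : ℕ) (hs : 2 ≤ s) (hst : s ≤ t)
    (X : Fin s → Fin t → R)
    -- R is a regular local ring of dimension st whose maximal ideal is generated by
    -- the st elements X i j (a regular system of parameters)
    (hmax : IsLocalRing.maximalIdeal R = entriesIdeal R X)
    (hdim : ringKrullDim R = (s * t : ℕ))
    -- A = R/I_s(X), with maximal ideal m the image of the ideal generated by all X i j,
    -- and q = QA the image of Q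
    (m : Ideal (R ⧸ minorsIdeal R X))
    (hm : m = (entriesIdeal R X).map (Ideal.Quotient.mk (minorsIdeal R X)))
    (q : Ideal (R ⧸ minorsIdeal R X))
    (hq : q = (diagIdeal R X).map (Ideal.Quotient.mk (minorsIdeal R X))) :
    -- q is a parameter ideal of A: it is generated by st − (t − s + 1) = dim A elements
    -- and is m-primary, and m^s = q·m^{s−1}
    (∃ f : Fin (s * t - (t - s + 1)) → R ⧸ minorsIdeal R X,
        q = Ideal.span (Set.range f)) ∧
      q.radical = m ∧
      m ^ s = q * m ^ (s - 1) := by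
  have h0 : 0 < s := by omega
  have hpow : entriesIdeal R X ^ s ≤
      diagIdeal R X * entriesIdeal R X ^ (s - 1) + minorsIdeal R X := Lpow_le X h0 hst
  have hqm : q ≤ m := by
    rw [hq, hm]
    exact Ideal.map_mono (diag_le_entries X)
  refine ⟨?_, ?_, ?_⟩
  · -- generated by s*t - (t-s+1) elements
    have e : s * t - (t - s + 1) = (s - 1) * (t + 1) := by
      obtain ⟨k, rfl⟩ : ∃ k, s = k + 2 := ⟨s - 2, by omega⟩
      obtain ⟨d, rfl⟩ : ∃ d, t = (k + 2) + d := ⟨t - (k + 2), by omega⟩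
      have h2 : (k + 2) * ((k + 2) + d) =
          (k + 2 - 1) * ((k + 2) + d + 1) + (((k + 2) + d) - (k + 2) + 1) := by
        have hd : ((k + 2) + d) - (k + 2) = d := by omega
        have hk : k + 2 - 1 = k + 1 := by omega
        rw [hd, hk]; ring
      exact Nat.sub_eq_of_eq_add h2
    have E : Fin (s * t - (t - s + 1)) ≃ Fin (s - 1) × Fin (t + 1) :=
      (finCongr e).trans finProdFinEquiv.symm
    refine ⟨((Ideal.Quotient.mk (minorsIdeal R X)) ∘ genFun hs hst X) ∘ E, ?_⟩
    have hrange : Set.range (((Ideal.Quotient.mk (minorsIdeal R X)) ∘ genFun hs hst X) ∘ E) =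
        (Ideal.Quotient.mk (minorsIdeal R X)) '' Set.range (genFun hs hst X) := by
      rw [E.surjective.range_comp, Set.range_comp]
    rw [hrange, hq, diagIdeal_eq_span_genFun hs hst X, Ideal.map_span]
  · -- radical of q is m
    apply le_antisymm
    · by_cases hIt : minorsIdeal R X = ⊤
      · have hsub : Subsingleton (R ⧸ minorsIdeal R X) :=
          Ideal.Quotient.subsingleton_iff.mpr hIt
        intro x _
        rw [hm]
        have hx : x = Ideal.Quotient.mk (minorsIdeal R X) 0 := Subsingleton.elim _ _
        rw [hx]
        exact Ideal.mem_map_of_mem _ (Submodule.zero_mem _)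
      · have hmtop : m ≠ ⊤ := by
          intro htop
          have hcomap : Ideal.comap (Ideal.Quotient.mk (minorsIdeal R X))
              (Ideal.map (Ideal.Quotient.mk (minorsIdeal R X)) (entriesIdeal R X)) =
              entriesIdeal R X ⊔ RingHom.ker (Ideal.Quotient.mk (minorsIdeal R X)) :=
            Ideal.comap_map_of_surjective _ Ideal.Quotient.mk_surjective _
          rw [Ideal.mk_ker] at hcomap
          have hLI : entriesIdeal R X ⊔ minorsIdeal R X = entriesIdeal R X :=
            sup_eq_left.mpr (minors_le_entries h0 X)
          rw [hm] at htop
          rw [htop, Ideal.comap_top, hLI] at hcomap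
          have hcon : IsLocalRing.maximalIdeal R = ⊤ := by rw [hmax, ← hcomap]
          exact (IsLocalRing.maximalIdeal.isMaximal R).ne_top hcon
        have hmmax : m.IsMaximal := by
          rcases Ideal.map_eq_top_or_isMaximal_of_surjective
              (Ideal.Quotient.mk (minorsIdeal R X)) Ideal.Quotient.mk_surjective
              (hmax ▸ IsLocalRing.maximalIdeal.isMaximal R :
                (entriesIdeal R X).IsMaximal) with h | h
          · exact absurd (hm ▸ h) hmtop
          · rwa [← hm] at h
        exact hmmax.isPrime.radical_le_iff.mpr hqm
    · -- m ≤ radical q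
      rw [hm, entriesIdeal, Ideal.map_span, Ideal.span_le]
      rintro x ⟨y, ⟨i, j, rfl⟩, rfl⟩
      have hXij : (X i j) ^ s ∈
          diagIdeal R X * entriesIdeal R X ^ (s - 1) + minorsIdeal R X :=
        hpow (Ideal.pow_mem_pow (entries_mem X i j) s)
      have hQI : diagIdeal R X * entriesIdeal R X ^ (s - 1) + minorsIdeal R X ≤
          diagIdeal R X ⊔ minorsIdeal R X :=
        sup_le_sup_right Ideal.mul_le_left _
      have hXij' : (X i j) ^ s ∈ diagIdeal R X ⊔ minorsIdeal R X := hQI hXij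
      rw [Submodule.mem_sup] at hXij'
      obtain ⟨a, ha, b, hb, hab⟩ := hXij'
      refine Ideal.mem_radical_iff.mpr ⟨s, ?_⟩
      rw [hq]
      have hmkpow : (Ideal.Quotient.mk (minorsIdeal R X) (X i j)) ^ s =
          Ideal.Quotient.mk (minorsIdeal R X) a := by
        rw [← map_pow, ← hab, map_add]
        have hb0 : Ideal.Quotient.mk (minorsIdeal R X) b = 0 :=
          Ideal.Quotient.eq_zero_iff_mem.mpr hb
        rw [hb0, add_zero]
      rw [hmkpow]
      exact Ideal.mem_map_of_mem _ ha
  · -- m ^ s = q * m ^ (s - 1)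
    apply le_antisymm
    · rw [hm, hq]
      calc (Ideal.map (Ideal.Quotient.mk (minorsIdeal R X)) (entriesIdeal R X)) ^ s
          = Ideal.map (Ideal.Quotient.mk (minorsIdeal R X)) (entriesIdeal R X ^ s) :=
            (Ideal.map_pow _ _ s).symm
        _ ≤ Ideal.map (Ideal.Quotient.mk (minorsIdeal R X))
              (diagIdeal R X * entriesIdeal R X ^ (s - 1) + minorsIdeal R X) :=
            Ideal.map_mono hpow
        _ = Ideal.map (Ideal.Quotient.mk (minorsIdeal R X))
              (diagIdeal R X * entriesIdeal R X ^ (s - 1)) ⊔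
            Ideal.map (Ideal.Quotient.mk (minorsIdeal R X)) (minorsIdeal R X) :=
            Ideal.map_sup _ _ _
        _ = Ideal.map (Ideal.Quotient.mk (minorsIdeal R X)) (diagIdeal R X) *
            Ideal.map (Ideal.Quotient.mk (minorsIdeal R X)) (entriesIdeal R X) ^ (s - 1) := by
            rw [Ideal.map_quotient_self, sup_bot_eq, Ideal.map_mul, Ideal.map_pow]
    · have h1 : q * m ^ (s - 1) ≤ m * m ^ (s - 1) := Ideal.mul_mono_left hqm
      have h2 : m * m ^ (s - 1) = m ^ s := by
        have h3 : m * m ^ (s - 1) = m ^ ((s - 1) + 1) := (pow_succ' m (s - 1)).symm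
        have h4 : (s - 1) + 1 = s := by omega
        rwa [h4] at h3
      rw [← h2]
      exact h1
end

section
/- Let (R,n) be a Noetherian local ring and let x_1,…,x_m, y_1,…,y_k ∈ n be a regular sequence on R. Set I = (x_1,…,x_m) and J = (y_1,…,y_k). Then I^i ∩ J^j = I^i·J^j for all i, j ≥ 0. -/
open Ideal Set Finset RingTheory.Sequence Submodule IsLocalRing

section
variable {R : Type*} [CommRing R]

lemma aux13_smul_top (A K : Ideal R) :
    (K • (⊤ : Submodule R (R ⧸ A))) = Submodule.map A.mkQ K := by
  apply le_antisymm
  · rw [Submodule.smul_le]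
    rintro kk hk mm -
    obtain ⟨r, rfl⟩ := A.mkQ_surjective mm
    exact ⟨kk * r, K.mul_mem_right r hk, rfl⟩
  · rintro _ ⟨kk, hk, rfl⟩
    have h1 : A.mkQ kk = kk • (A.mkQ 1) := by
      rw [← map_smul, smul_eq_mul, mul_one]
    rw [h1]
    exact Submodule.smul_mem_smul hk Submodule.mem_top

noncomputable def aux13_qe (A K : Ideal R) :
    ((R ⧸ A) ⧸ (K • (⊤ : Submodule R (R ⧸ A)))) ≃ₗ[R] R ⧸ (A ⊔ K) :=
  (Submodule.quotEquivOfEq _ _ (aux13_smul_top A K)) ≪≫ₗ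
    (Submodule.quotientQuotientEquivQuotientSup A K)

noncomputable def aux13_qst (A : Ideal R) (a : R) :
    QuotSMulTop a (R ⧸ A) ≃ₗ[R] R ⧸ (A ⊔ Ideal.span {a}) :=
  (Submodule.quotEquivOfEq _ _ (Submodule.ideal_span_singleton_smul a ⊤).symm) ≪≫ₗ
    aux13_qe A (Ideal.span {a})

lemma aux13_smul_reg_iff (B : Ideal R) (r : R) :
    IsSMulRegular (R ⧸ B) r ↔ ∀ c, r * c ∈ B → c ∈ B := by
  constructor
  · intro h c hc
    have h0 : r • (B.mkQ c) = r • (B.mkQ 0) := by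
      rw [← map_smul, ← map_smul, smul_eq_mul, smul_eq_mul, mul_zero,
        show B.mkQ (r * c) = 0 from (Submodule.Quotient.mk_eq_zero _).2 hc, map_zero]
    have h2 := h h0
    rw [map_zero] at h2
    exact (Submodule.Quotient.mk_eq_zero _).1 h2
  · intro h a b hab
    obtain ⟨c, rfl⟩ := B.mkQ_surjective a
    obtain ⟨c', rfl⟩ := B.mkQ_surjective b
    simp only [← map_smul, smul_eq_mul, Submodule.mkQ_apply] at hab
    have h3 : r * c - r * c' ∈ B := (Submodule.Quotient.eq B).1 hab
    rw [← mul_sub] at h3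
    simp only [Submodule.mkQ_apply]
    exact (Submodule.Quotient.eq B).2 (h _ h3)

lemma aux13_cons (A : Ideal R) (a : R) (l : List R) :
    IsWeaklyRegular (R ⧸ A) (a :: l) ↔
      (∀ c, a * c ∈ A → c ∈ A) ∧ IsWeaklyRegular (R ⧸ (A ⊔ Ideal.span {a})) l := by
  rw [isWeaklyRegular_cons_iff, ((aux13_qst A a).isWeaklyRegular_congr l),
    aux13_smul_reg_iff]

lemma aux13_append (A : Ideal R) (l₁ l₂ : List R) :
    IsWeaklyRegular (R ⧸ A) (l₁ ++ l₂) ↔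
      IsWeaklyRegular (R ⧸ A) l₁ ∧ IsWeaklyRegular (R ⧸ (A ⊔ Ideal.ofList l₁)) l₂ := by
  induction l₁ generalizing A with
  | nil =>
    have hA : A ⊔ Ideal.ofList ([] : List R) = A := by
      rw [Ideal.ofList_nil, sup_bot_eq]
    rw [List.nil_append, hA]
    exact ⟨fun h => ⟨by simp, h⟩, fun h => h.2⟩
  | cons a l₁ ih =>
    rw [List.cons_append, aux13_cons, aux13_cons, ih, Ideal.ofList_cons, and_assoc,
      sup_assoc]

/-- monomial -/
def aux13_mon {n : ℕ} (z : Fin n → R) (α : Fin n → ℕ) : R := ∏ t, z t ^ α t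

lemma aux13_mon_add_single {n : ℕ} (z : Fin n → R) (α : Fin n → ℕ) (t : Fin n) :
    aux13_mon z (α + (Pi.single t 1 : Fin n → ℕ)) = aux13_mon z α * z t := by
  unfold aux13_mon
  have h1 : ∀ s, z s ^ (α + (Pi.single t 1 : Fin n → ℕ)) s
      = z s ^ α s * z s ^ (Pi.single t 1 : Fin n → ℕ) s :=
    fun s => by rw [Pi.add_apply, pow_add]
  rw [Finset.prod_congr rfl (fun s _ => h1 s), Finset.prod_mul_distrib]
  congr 1
  rw [Finset.prod_eq_single t (fun s _ hs => by rw [Pi.single_eq_of_ne hs, pow_zero])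
    (by simp)]
  rw [Pi.single_eq_same, pow_one]

lemma aux13_sum_add_single {n : ℕ} (α : Fin n → ℕ) (t : Fin n) :
    ∑ s, (α + (Pi.single t 1 : Fin n → ℕ)) s = (∑ s, α s) + 1 := by
  simp only [Pi.add_apply]
  rw [Finset.sum_add_distrib]
  congr 1
  rw [Finset.sum_eq_single t (fun s _ hs => Pi.single_eq_of_ne hs 1) (by simp)]
  exact Pi.single_eq_same t 1

lemma aux13_span_range_pow {n : ℕ} (z : Fin n → R) (d : ℕ) :
    (Ideal.span (Set.range z)) ^ d
      = Ideal.span (aux13_mon z '' ↑(Finset.Nat.antidiagonalTuple n d)) := by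
  induction d with
  | zero =>
    rw [pow_zero, Finset.Nat.antidiagonalTuple_zero_right]
    rw [Ideal.one_eq_top, eq_comm, Ideal.eq_top_iff_one]
    apply Ideal.subset_span
    refine ⟨0, by simp, ?_⟩
    simp [aux13_mon]
  | succ d ih =>
    rw [pow_succ, ih, Ideal.span_mul_span']
    congr 1
    apply Set.eq_of_subset_of_subset
    · rintro _ ⟨_, ⟨β, hβ, rfl⟩, _, ⟨t, rfl⟩, rfl⟩
      refine ⟨β + (Pi.single t 1 : Fin n → ℕ), ?_, aux13_mon_add_single z β t⟩
      simp only [Finset.mem_coe, Finset.Nat.mem_antidiagonalTuple] at *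
      rw [aux13_sum_add_single, hβ]
    · rintro _ ⟨β, hβ, rfl⟩
      simp only [Finset.mem_coe, Finset.Nat.mem_antidiagonalTuple] at hβ
      have hne : ∃ t, β t ≠ 0 := by
        by_contra hall
        push_neg at hall
        have : ∑ s, β s = 0 := Finset.sum_eq_zero (fun s _ => hall s)
        omega
      obtain ⟨t, ht⟩ := hne
      set γ : Fin n → ℕ := Function.update β t (β t - 1) with hγ
      have hβγ : γ + (Pi.single t 1 : Fin n → ℕ) = β := by
        funext s
        by_cases hs : s = t
        · subst hs
          simp only [Pi.add_apply, hγ, Function.update_self, Pi.single_eq_same]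
          omega
        · simp [hγ, Pi.add_apply, Function.update_of_ne hs, Pi.single_eq_of_ne hs]
      have hγd : ∑ s, γ s = d := by
        have := aux13_sum_add_single γ t
        rw [hβγ] at this
        omega
      rw [← hβγ, aux13_mon_add_single]
      exact Set.mul_mem_mul ⟨γ, Finset.mem_coe.2 ((Finset.Nat.mem_antidiagonalTuple).2 hγd), rfl⟩ ⟨t, rfl⟩

lemma aux13_mon_mem {n : ℕ} (z : Fin n → R) {d : ℕ} {α : Fin n → ℕ}
    (hα : α ∈ Finset.Nat.antidiagonalTuple n d) :
    aux13_mon z α ∈ (Ideal.span (Set.range z)) ^ d := by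
  rw [aux13_span_range_pow]
  exact Ideal.subset_span ⟨α, by simpa using hα, rfl⟩

lemma aux13_msum_mem {n : ℕ} (z : Fin n → R) (d : ℕ) (c : (Fin n → ℕ) → R) :
    (∑ α ∈ Finset.Nat.antidiagonalTuple n d, c α * aux13_mon z α)
      ∈ (Ideal.span (Set.range z)) ^ d :=
  Ideal.sum_mem _ (fun α hα => Ideal.mul_mem_left _ _ (aux13_mon_mem z hα))

lemma aux13_mem_pow {n : ℕ} (z : Fin n → R) (d : ℕ) (u : R)
    (hu : u ∈ (Ideal.span (Set.range z)) ^ d) :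
    ∃ c : (Fin n → ℕ) → R,
      u = ∑ α ∈ Finset.Nat.antidiagonalTuple n d, c α * aux13_mon z α := by
  classical
  have himg : aux13_mon z '' ↑(Finset.Nat.antidiagonalTuple n d)
      = Set.range (fun i : (Finset.Nat.antidiagonalTuple n d) => aux13_mon z i.1) := by
    ext r
    constructor
    · rintro ⟨α, hα, rfl⟩
      exact ⟨⟨α, Finset.mem_coe.1 hα⟩, rfl⟩
    · rintro ⟨i, rfl⟩
      exact ⟨i.1, Finset.mem_coe.2 i.2, rfl⟩
  rw [aux13_span_range_pow, himg, ← Ideal.submodule_span_eq,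
    mem_span_range_iff_exists_fun] at hu
  obtain ⟨cc, hcc⟩ := hu
  refine ⟨fun α => if h : α ∈ Finset.Nat.antidiagonalTuple n d then cc ⟨α, h⟩ else 0, ?_⟩
  rw [← hcc]
  rw [← Finset.sum_coe_sort (Finset.Nat.antidiagonalTuple n d)
    (fun α => (if h : α ∈ Finset.Nat.antidiagonalTuple n d then cc ⟨α, h⟩ else 0)
      * aux13_mon z α)]
  apply Finset.sum_congr rfl
  intro i _
  rw [dif_pos i.2, smul_eq_mul]


lemma aux13_mon_one {n : ℕ} (z : Fin n → R) : aux13_mon z 0 = 1 := by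
  simp [aux13_mon]

lemma aux13_mon_cast {n : ℕ} (z : Fin (n+1) → R) (α : Fin (n+1) → ℕ)
    (h : α (Fin.last n) = 0) :
    aux13_mon z α = aux13_mon (z ∘ Fin.castSucc) (α ∘ Fin.castSucc) := by
  unfold aux13_mon
  rw [Fin.prod_univ_castSucc (f := fun t => z t ^ α t), h, pow_zero, mul_one]
  rfl

lemma aux13_ofList_ofFn {n : ℕ} (z : Fin n → R) :
    Ideal.ofList (List.ofFn z) = Ideal.span (Set.range z) := by
  unfold Ideal.ofList
  congr 1
  ext r
  simp [List.mem_ofFn]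

lemma aux13_B {n : ℕ} (z : Fin n → R) (A : Ideal R) (w : R)
    (hqr : ∀ (d : ℕ) (c : (Fin n → ℕ) → R),
      (∑ α ∈ Finset.Nat.antidiagonalTuple n d, c α * aux13_mon z α)
          ∈ (Ideal.span (Set.range z))^(d+1) ⊔ A →
      ∀ α ∈ Finset.Nat.antidiagonalTuple n d, c α ∈ Ideal.span (Set.range z) ⊔ A)
    (hWR : IsWeaklyRegular (R ⧸ A) (List.ofFn z ++ [w])) :
    ∀ (d : ℕ) (c : R), w * c ∈ (Ideal.span (Set.range z))^d ⊔ A →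
      c ∈ (Ideal.span (Set.range z))^d ⊔ A := by
  have hlast : ∀ c, w * c ∈ A ⊔ Ideal.span (Set.range z) → c ∈ A ⊔ Ideal.span (Set.range z) := by
    have h1 := ((aux13_append A _ _).1 hWR).2
    rw [aux13_ofList_ofFn] at h1
    exact ((aux13_cons _ _ _).1 h1).1
  intro d
  induction d with
  | zero =>
    intro c _
    rw [pow_zero, Ideal.one_eq_top, top_sup_eq]
    trivial
  | succ d ih =>
    intro c hc
    have hc' : c ∈ (Ideal.span (Set.range z))^d ⊔ A := by
      refine ih c (sup_le_sup_right (Ideal.pow_le_pow_right (Nat.le_succ d)) A hc)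
    obtain ⟨t, ht, a, ha, hca⟩ := Submodule.mem_sup.1 hc'
    obtain ⟨u, hu⟩ := aux13_mem_pow z d t ht
    have hsum : (∑ α ∈ Finset.Nat.antidiagonalTuple n d, (w * u α) * aux13_mon z α)
        ∈ (Ideal.span (Set.range z))^(d+1) ⊔ A := by
      have heq : (∑ α ∈ Finset.Nat.antidiagonalTuple n d, (w * u α) * aux13_mon z α)
          = w * c - w * a := by
        rw [← hca, mul_add, add_sub_cancel_right, hu, Finset.mul_sum]
        exact Finset.sum_congr rfl (fun α _ => by ring)
      rw [heq]
      exact sub_mem hc (Submodule.mem_sup_right (A.mul_mem_left w ha))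
    have hcoef := hqr d (fun α => w * u α) hsum
    have hu' : ∀ α ∈ Finset.Nat.antidiagonalTuple n d,
        u α ∈ Ideal.span (Set.range z) ⊔ A := by
      intro α hα
      have h2 := hcoef α hα
      rw [sup_comm] at h2 ⊢
      exact hlast (u α) h2
    rw [← hca]
    refine add_mem ?_ (Submodule.mem_sup_right ha)
    rw [hu]
    refine Submodule.sum_mem _ (fun α hα => ?_)
    obtain ⟨v, hv, b, hb, hvb⟩ := Submodule.mem_sup.1 (hu' α hα)
    rw [← hvb, add_mul]
    refine add_mem (Submodule.mem_sup_left ?_) (Submodule.mem_sup_right (A.mul_mem_right _ hb))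
    rw [pow_succ']
    exact Ideal.mul_mem_mul hv (aux13_mon_mem z hα)

lemma aux13_qr_d0 {n : ℕ} (z : Fin n → R) (A : Ideal R) (c : (Fin n → ℕ) → R)
    (hsum : (∑ α ∈ Finset.Nat.antidiagonalTuple n 0, c α * aux13_mon z α)
      ∈ (Ideal.span (Set.range z))^1 ⊔ A) :
    ∀ α ∈ Finset.Nat.antidiagonalTuple n 0, c α ∈ Ideal.span (Set.range z) ⊔ A := by
  intro α hα
  rw [Finset.Nat.antidiagonalTuple_zero_right] at hsum hα
  rw [Finset.mem_singleton] at hα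
  subst hα
  rw [Finset.sum_singleton, aux13_mon_one, mul_one, pow_one] at hsum
  exact hsum

theorem aux13_qr : ∀ (n : ℕ) (z : Fin n → R) (A : Ideal R),
    IsWeaklyRegular (R ⧸ A) (List.ofFn z) →
    ∀ (d : ℕ) (c : (Fin n → ℕ) → R),
      (∑ α ∈ Finset.Nat.antidiagonalTuple n d, c α * aux13_mon z α)
          ∈ (Ideal.span (Set.range z))^(d+1) ⊔ A →
      ∀ α ∈ Finset.Nat.antidiagonalTuple n d, c α ∈ Ideal.span (Set.range z) ⊔ A := by
  intro n
  induction n with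
  | zero =>
    intro z A _ d c hsum α hα
    match d with
    | 0 => exact aux13_qr_d0 z A c hsum α hα
    | (e+1) =>
      exfalso
      rw [Finset.Nat.mem_antidiagonalTuple] at hα
      simpa using hα
  | succ n ihn =>
    intro z A hWR d
    induction d with
    | zero => exact fun c hsum => aux13_qr_d0 z A c hsum
    | succ e ihe =>
      intro c hsum
      set L : Fin (n+1) := Fin.last n with hL
      set w : R := z L with hw
      set z' : Fin n → R := z ∘ Fin.castSucc with hz'
      set Z : Ideal R := Ideal.span (Set.range z) with hZdef
      set Z' : Ideal R := Ideal.span (Set.range z') with hZ'def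
      -- list facts
      have hofn : List.ofFn z = List.ofFn z' ++ [w] := by
        rw [List.ofFn_succ' z, List.concat_eq_append]
        rfl
      have hWR' : IsWeaklyRegular (R ⧸ A) (List.ofFn z' ++ [w]) := by rwa [hofn] at hWR
      have hWRz' : IsWeaklyRegular (R ⧸ A) (List.ofFn z') := ((aux13_append A _ _).1 hWR').1
      have hB := aux13_B z' A w (ihn z' A hWRz') hWR'
      -- ideal facts
      have hZ'Z : Z' ≤ Z := by
        apply Ideal.span_mono
        rintro _ ⟨s, rfl⟩
        exact ⟨Fin.castSucc s, rfl⟩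
      have hwZ : Ideal.span {w} ≤ Z := by
        rw [Ideal.span_le, Set.singleton_subset_iff]
        exact Ideal.subset_span ⟨L, rfl⟩
      have hZsup : Z ≤ Z' ⊔ Ideal.span {w} := by
        rw [hZdef, Ideal.span_le]
        rintro _ ⟨t, rfl⟩
        induction t using Fin.lastCases with
        | last => exact Submodule.mem_sup_right (Ideal.subset_span rfl)
        | cast s => exact Submodule.mem_sup_left (Ideal.subset_span ⟨s, rfl⟩)
      have hpow : ∀ dd : ℕ, Z^(dd+1) ≤ Z'^(dd+1) ⊔ Ideal.span {w} * Z^dd := by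
        intro dd
        induction dd with
        | zero =>
          rw [pow_one, pow_one, pow_zero, Ideal.one_eq_top, Ideal.mul_top]
          exact hZsup
        | succ dd ihd =>
          calc Z^(dd+2) = Z^(dd+1) * Z := by rw [← pow_succ]
          _ ≤ (Z'^(dd+1) ⊔ Ideal.span {w} * Z^dd) * Z := Ideal.mul_mono_left ihd
          _ ≤ Z'^(dd+2) ⊔ Ideal.span {w} * Z^(dd+1) := by
              rw [Ideal.sup_mul]
              apply sup_le
              · calc Z'^(dd+1) * Z ≤ Z'^(dd+1) * (Z' ⊔ Ideal.span {w}) :=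
                      Ideal.mul_mono_right hZsup
                _ = Z'^(dd+2) ⊔ Z'^(dd+1) * Ideal.span {w} := by
                      rw [Ideal.mul_sup, ← pow_succ]
                _ ≤ Z'^(dd+2) ⊔ Ideal.span {w} * Z^(dd+1) := by
                      apply sup_le_sup_left
                      rw [mul_comm]
                      exact Ideal.mul_mono_right (Ideal.pow_right_mono hZ'Z (dd+1))
              · rw [mul_assoc, ← pow_succ]
                exact le_sup_right
      -- the sum splitting
      set g : (Fin n → ℕ) → R := fun γ => c (Fin.snoc γ 0) with hg
      set h : (Fin (n+1) → ℕ) → R := fun β => c (β + (Pi.single L 1 : Fin (n+1) → ℕ)) with hh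
      set msumG : R := ∑ γ ∈ Finset.Nat.antidiagonalTuple n (e+1), g γ * aux13_mon z' γ
        with hmsumG
      set msumH : R := ∑ β ∈ Finset.Nat.antidiagonalTuple (n+1) e, h β * aux13_mon z β
        with hmsumH
      have hsplit : (∑ α ∈ Finset.Nat.antidiagonalTuple (n+1) (e+1), c α * aux13_mon z α)
          = msumG + w * msumH := by
        rw [← Finset.sum_filter_add_sum_filter_not
          (Finset.Nat.antidiagonalTuple (n+1) (e+1)) (fun α => α L = 0)
          (fun α => c α * aux13_mon z α)]
        congr 1
        · -- the part with α L = 0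
          refine Finset.sum_nbij' (fun α => α ∘ Fin.castSucc) (fun γ => Fin.snoc γ 0)
            ?_ ?_ ?_ ?_ ?_
          · intro α hα
            rw [Finset.mem_filter, Finset.Nat.mem_antidiagonalTuple] at hα
            rw [Finset.Nat.mem_antidiagonalTuple]
            show ∑ i : Fin n, α (Fin.castSucc i) = e + 1
            have h1 := Fin.sum_univ_castSucc (f := α)
            have h2 : α (Fin.last n) = 0 := hα.2
            have h3 : ∑ i, α i = e + 1 := hα.1
            omega
          · intro γ hγ
            rw [Finset.Nat.mem_antidiagonalTuple] at hγ
            rw [Finset.mem_filter, Finset.Nat.mem_antidiagonalTuple]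
            constructor
            · rw [Fin.sum_univ_castSucc]
              simp only [Fin.snoc_castSucc, Fin.snoc_last, hγ]
            · show (Fin.snoc γ 0 : Fin (n+1) → ℕ) (Fin.last n) = 0
              rw [Fin.snoc_last]
          · intro α hα
            rw [Finset.mem_filter] at hα
            show Fin.snoc (α ∘ Fin.castSucc) 0 = α
            funext t
            induction t using Fin.lastCases with
            | last =>
              rw [Fin.snoc_last]
              exact hα.2.symm
            | cast s =>
              rw [Fin.snoc_castSucc]
              rfl
          · intro γ _
            show (Fin.snoc γ 0 : Fin (n+1) → ℕ) ∘ Fin.castSucc = γ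
            funext s
            exact Fin.snoc_castSucc _ _ _
          · intro α hα
            rw [Finset.mem_filter] at hα
            show c α * aux13_mon z α
              = g (α ∘ Fin.castSucc) * aux13_mon z' (α ∘ Fin.castSucc)
            have hc : g (α ∘ Fin.castSucc) = c α := by
              rw [hg]
              show c (Fin.snoc (α ∘ Fin.castSucc) 0) = c α
              congr 1
              funext t
              induction t using Fin.lastCases with
              | last =>
                rw [Fin.snoc_last]
                exact hα.2.symm
              | cast s =>
                rw [Fin.snoc_castSucc]
                rfl
            rw [hc, aux13_mon_cast z α hα.2, ← hz']
        · -- the part with α L ≠ 0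
          rw [Finset.mul_sum]
          refine Finset.sum_nbij' (fun α => α - (Pi.single L 1 : Fin (n+1) → ℕ))
            (fun β => β + (Pi.single L 1 : Fin (n+1) → ℕ)) ?_ ?_ ?_ ?_ ?_
          · intro α hα
            rw [Finset.mem_filter, Finset.Nat.mem_antidiagonalTuple] at hα
            rw [Finset.Nat.mem_antidiagonalTuple]
            have hrec : (α - (Pi.single L 1 : Fin (n+1) → ℕ))
                + (Pi.single L 1 : Fin (n+1) → ℕ) = α := by
              funext s
              by_cases hs : s = L
              · subst hs
                simp only [Pi.add_apply, Pi.sub_apply, Pi.single_eq_same]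
                have := hα.2
                omega
              · simp [Pi.single_eq_of_ne hs]
            have h5 := aux13_sum_add_single (α - (Pi.single L 1 : Fin (n+1) → ℕ)) L
            rw [hrec] at h5
            have h6 : ∑ i, α i = e + 1 := hα.1
            show ∑ s, (α - (Pi.single L 1 : Fin (n+1) → ℕ)) s = e
            omega
          · intro β hβ
            rw [Finset.Nat.mem_antidiagonalTuple] at hβ
            rw [Finset.mem_filter, Finset.Nat.mem_antidiagonalTuple]
            constructor
            · rw [aux13_sum_add_single, hβ]
            · simp
          · intro α hα
            rw [Finset.mem_filter] at hα
            funext s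
            by_cases hs : s = L
            · subst hs
              simp only [Pi.add_apply, Pi.sub_apply, Pi.single_eq_same]
              have := hα.2
              omega
            · simp [Pi.single_eq_of_ne hs]
          · intro β _
            funext s
            by_cases hs : s = L
            · subst hs
              simp [Pi.single_eq_same]
            · simp [Pi.single_eq_of_ne hs]
          · intro α hα
            rw [Finset.mem_filter] at hα
            have hrec : (α - (Pi.single L 1 : Fin (n+1) → ℕ))
                + (Pi.single L 1 : Fin (n+1) → ℕ) = α := by
              funext s
              by_cases hs : s = L
              · subst hs
                simp only [Pi.add_apply, Pi.sub_apply, Pi.single_eq_same]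
                have := hα.2
                omega
              · simp [Pi.single_eq_of_ne hs]
            show c α * aux13_mon z α
              = w * (h (α - (Pi.single L 1 : Fin (n+1) → ℕ))
                  * aux13_mon z (α - (Pi.single L 1 : Fin (n+1) → ℕ)))
            have hcv : h (α - (Pi.single L 1 : Fin (n+1) → ℕ)) = c α := by
              rw [hh]
              show c ((α - (Pi.single L 1 : Fin (n+1) → ℕ))
                + (Pi.single L 1 : Fin (n+1) → ℕ)) = c α
              rw [hrec]
            have hmv : aux13_mon z α
                = aux13_mon z (α - (Pi.single L 1 : Fin (n+1) → ℕ)) * z L := by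
              conv_lhs => rw [← hrec]
              rw [aux13_mon_add_single]
            rw [hcv, hmv, hw]
            ring
      -- main chain
      have hmem2 : msumG + w * msumH ∈ (Z'^(e+2) ⊔ Ideal.span {w} * Z^(e+1)) ⊔ A := by
        rw [← hsplit]
        exact (sup_le_sup_right (hpow (e+1)) A) hsum
      obtain ⟨t2, ht2, a, ha, heq0⟩ := Submodule.mem_sup.1 hmem2
      obtain ⟨p, hp, v, hv, hpv⟩ := Submodule.mem_sup.1 ht2
      obtain ⟨q, hq, hwq⟩ := Ideal.mem_span_singleton_mul.1 hv
      have hmsum : msumG + w * msumH = p + w * q + a := by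
        rw [← heq0, ← hpv, hwq]
      have hG : msumG ∈ Z'^(e+1) := by
        refine Submodule.sum_mem _ (fun γ hγ => ?_)
        exact Ideal.mul_mem_left _ _ (aux13_mon_mem z' hγ)
      have hww : w * (msumH - q) ∈ Z'^(e+1) ⊔ A := by
        have heq1 : w * (msumH - q) = (p - msumG) + a := by linear_combination hmsum
        rw [heq1]
        refine add_mem (Submodule.mem_sup_left (sub_mem ?_ hG)) (Submodule.mem_sup_right ha)
        exact Ideal.pow_le_pow_right (Nat.le_succ _) hp
      have hww2 : msumH - q ∈ Z'^(e+1) ⊔ A := hB (e+1) _ hww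
      have hH : msumH ∈ Z^(e+1) ⊔ A := by
        have heq2 : msumH = (msumH - q) + q := by ring
        rw [heq2]
        refine add_mem ?_ (Submodule.mem_sup_left hq)
        exact (sup_le_sup_right (Ideal.pow_right_mono hZ'Z (e+1)) A) hww2
      have hcoefH : ∀ β ∈ Finset.Nat.antidiagonalTuple (n+1) e, h β ∈ Z ⊔ A := by
        refine ihe h ?_
        rw [← hmsumH]
        exact hH
      obtain ⟨s2, hs2, a', ha', hsa⟩ := Submodule.mem_sup.1 hww2
      obtain ⟨q', hq'⟩ := aux13_mem_pow z' (e+1) s2 hs2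
      have hstep : (∑ γ ∈ Finset.Nat.antidiagonalTuple n (e+1),
          (g γ + w * q' γ) * aux13_mon z' γ) = msumG + w * s2 := by
        rw [hq', Finset.mul_sum, hmsumG, ← Finset.sum_add_distrib]
        exact Finset.sum_congr rfl (fun γ _ => by ring)
      have hstep2 : (∑ γ ∈ Finset.Nat.antidiagonalTuple n (e+1),
          (g γ + w * q' γ) * aux13_mon z' γ) ∈ Z'^(e+2) ⊔ A := by
        have h9 : msumG + w * s2 = p + (a - w * a') := by linear_combination hmsum + w * hsa
        rw [hstep, h9]
        exact add_mem (Submodule.mem_sup_left hp)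
          (Submodule.mem_sup_right (sub_mem ha (A.mul_mem_left w ha')))
      have hcoefG := ihn z' A hWRz' (e+1) (fun γ => g γ + w * q' γ) hstep2
      -- conclude
      intro α hα
      by_cases hαL : α L = 0
      · have hγmem : α ∘ Fin.castSucc ∈ Finset.Nat.antidiagonalTuple n (e+1) := by
          rw [Finset.Nat.mem_antidiagonalTuple] at hα ⊢
          show ∑ i : Fin n, α (Fin.castSucc i) = e + 1
          have h1 := Fin.sum_univ_castSucc (f := α)
          have h2 : α (Fin.last n) = 0 := hαL
          omega
        have hc : c α = g (α ∘ Fin.castSucc) := by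
          rw [hg]
          show c α = c (Fin.snoc (α ∘ Fin.castSucc) 0)
          congr 1
          funext t
          induction t using Fin.lastCases with
          | last => rw [Fin.snoc_last]; exact hαL
          | cast s => rw [Fin.snoc_castSucc]; rfl
        have h10 : g (α ∘ Fin.castSucc) + w * q' (α ∘ Fin.castSucc) ∈ Z' ⊔ A :=
          hcoefG _ hγmem
        have h11 : g (α ∘ Fin.castSucc)
            = (g (α ∘ Fin.castSucc) + w * q' (α ∘ Fin.castSucc)) - w * q' (α ∘ Fin.castSucc) := by
          ring
        rw [hc, h11]
        refine sub_mem ((sup_le_sup_right hZ'Z A) h10) (Submodule.mem_sup_left (hwZ ?_))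
        exact Ideal.mem_span_singleton'.2 ⟨q' (α ∘ Fin.castSucc), mul_comm _ _⟩
      · have hrec : (α - (Pi.single L 1 : Fin (n+1) → ℕ))
            + (Pi.single L 1 : Fin (n+1) → ℕ) = α := by
          funext s
          by_cases hs : s = L
          · subst hs
            simp only [Pi.add_apply, Pi.sub_apply, Pi.single_eq_same]
            omega
          · simp [Pi.single_eq_of_ne hs]
        have hβmem : α - (Pi.single L 1 : Fin (n+1) → ℕ)
            ∈ Finset.Nat.antidiagonalTuple (n+1) e := by
          rw [Finset.Nat.mem_antidiagonalTuple] at hα ⊢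
          have h5 := aux13_sum_add_single (α - (Pi.single L 1 : Fin (n+1) → ℕ)) L
          rw [hrec] at h5
          omega
        have hc : c α = h (α - (Pi.single L 1 : Fin (n+1) → ℕ)) := by
          rw [hh]
          show c α = c ((α - (Pi.single L 1 : Fin (n+1) → ℕ))
            + (Pi.single L 1 : Fin (n+1) → ℕ))
          rw [hrec]
        rw [hc]
        exact hcoefH _ hβmem

lemma aux13_seq [IsNoetherianRing R] [IsLocalRing R] {m : ℕ} (x : Fin m → R)
    (hx : ∀ u, x u ∈ maximalIdeal R) :
    ∀ (ys : List R) (A : Ideal R), (∀ r ∈ ys, r ∈ maximalIdeal R) →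
      IsWeaklyRegular (R ⧸ A) (List.ofFn x ++ ys) → ∀ i : ℕ,
      IsWeaklyRegular (R ⧸ (A ⊔ (Ideal.span (Set.range x))^i)) ys := by
  intro ys
  induction ys with
  | nil =>
    intro A _ _ i
    exact ⟨fun j hj => absurd hj (by simp)⟩
  | cons w rest ih =>
    intro A hmem hWR i
    have hxw : IsWeaklyRegular (R ⧸ A) (List.ofFn x ++ [w]) := by
      have hWR2 := hWR
      have hl : List.ofFn x ++ w :: rest = (List.ofFn x ++ [w]) ++ rest := by simp
      rw [hl] at hWR2
      exact ((aux13_append A _ _).1 hWR2).1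
    have hqrx := aux13_qr m x A ((aux13_append A _ _).1 hxw).1
    have hBx := aux13_B x A w hqrx hxw
    rw [aux13_cons]
    constructor
    · intro cc hcc
      rw [sup_comm A _] at hcc ⊢
      exact hBx i cc hcc
    · have hperm : IsWeaklyRegular (R ⧸ A) (w :: (List.ofFn x ++ rest)) := by
        refine IsLocalRing.isWeaklyRegular_of_perm_of_subset_maximalIdeal ?_ List.perm_middle ?_
        · exact hWR
        · intro r hr
          rw [List.mem_append] at hr
          rcases hr with hr | hr
          · rw [List.mem_ofFn] at hr
            obtain ⟨u, rfl⟩ := hr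
            exact hx u
          · rcases List.mem_cons.1 hr with hr | hr
            · subst hr; exact hmem r (List.mem_cons_self)
            · exact hmem r (List.mem_cons_of_mem _ hr)
      have h2 := ((aux13_cons A w _).1 hperm).2
      have h3 := ih (A ⊔ Ideal.span {w})
        (fun r hr => hmem r (List.mem_cons_of_mem _ hr)) h2 i
      have heq : A ⊔ Ideal.span {w} ⊔ (Ideal.span (Set.range x))^i
          = A ⊔ (Ideal.span (Set.range x))^i ⊔ Ideal.span {w} := sup_right_comm _ _ _
      rwa [heq] at h3

lemma aux13_closure [IsNoetherianRing R] [IsLocalRing R] (B : Ideal R) (u : R)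
    (h : ∀ s : ℕ, u ∈ B ⊔ (maximalIdeal R)^s) : u ∈ B := by
  have hne : maximalIdeal R ≠ ⊤ := (maximalIdeal.isMaximal R).ne_top
  have hbot := Ideal.iInf_pow_smul_eq_bot_of_isLocalRing
    (I := maximalIdeal R) (M := R ⧸ B) hne
  have hmem : B.mkQ u ∈ (⨅ s : ℕ, (maximalIdeal R)^s • (⊤ : Submodule R (R ⧸ B))) := by
    rw [Submodule.mem_iInf]
    intro s
    rw [aux13_smul_top B ((maximalIdeal R)^s)]
    obtain ⟨b, hb, kk, hk, hbk⟩ := Submodule.mem_sup.1 (h s)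
    refine ⟨kk, hk, ?_⟩
    rw [← hbk, map_add]
    have hb0 : B.mkQ b = 0 := (Submodule.Quotient.mk_eq_zero B).2 hb
    rw [hb0, zero_add]
  rw [hbot] at hmem
  exact (Submodule.Quotient.mk_eq_zero B).1 (Submodule.mem_bot R |>.1 hmem)


end

theorem stmt_13
    (R : Type*) [CommRing R] [IsNoetherianRing R] [IsLocalRing R]
    (m k : ℕ) (x : Fin m → R) (y : Fin k → R)
    -- x₁, …, x_m, y₁, …, y_k lie in the maximal ideal and form a regular sequence on R
    (hx : ∀ u, x u ∈ IsLocalRing.maximalIdeal R)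
    (hy : ∀ u, y u ∈ IsLocalRing.maximalIdeal R)
    (hreg : RingTheory.Sequence.IsRegular R (List.ofFn x ++ List.ofFn y)) :
    ∀ i j : ℕ,
      Ideal.span (Set.range x) ^ i ⊓ Ideal.span (Set.range y) ^ j =
        Ideal.span (Set.range x) ^ i * Ideal.span (Set.range y) ^ j := by
  have hWR0 : IsWeaklyRegular (R ⧸ (⊥ : Ideal R)) (List.ofFn x ++ List.ofFn y) := by
    have e : R ≃ₗ[R] (R ⧸ (⊥ : Ideal R)) :=
      (Submodule.quotEquivOfEqBot (⊥ : Submodule R R) rfl).symm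
    exact (e.isWeaklyRegular_congr _).1 hreg.toIsWeaklyRegular
  have hWRy : ∀ i : ℕ,
      IsWeaklyRegular (R ⧸ ((Ideal.span (Set.range x))^i)) (List.ofFn y) := by
    intro i
    have := aux13_seq x hx (List.ofFn y) ⊥
      (fun r hr => by rw [List.mem_ofFn] at hr; obtain ⟨u, rfl⟩ := hr; exact hy u) hWR0 i
    rwa [bot_sup_eq] at this
  set X : Ideal R := Ideal.span (Set.range x) with hX
  set Y : Ideal R := Ideal.span (Set.range y) with hY
  have hstar : ∀ i j : ℕ, X^i ⊓ Y^j ≤ X^i * Y^j ⊔ Y^(j+1) := by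
    intro i j r hr
    obtain ⟨c, hc⟩ := aux13_mem_pow y j r hr.2
    have hs : (∑ α ∈ Finset.Nat.antidiagonalTuple k j, c α * aux13_mon y α)
        ∈ Y^(j+1) ⊔ X^i := by
      rw [← hc]
      exact Submodule.mem_sup_right hr.1
    have hcoef := aux13_qr k y (X^i) (hWRy i) j c hs
    rw [hc]
    refine Submodule.sum_mem _ (fun α hα => ?_)
    obtain ⟨v, hv, u, hu, hvu⟩ := Submodule.mem_sup.1 (hcoef α hα)
    rw [← hvu, add_mul]
    refine add_mem (Submodule.mem_sup_right ?_) (Submodule.mem_sup_left ?_)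
    · rw [pow_succ']
      exact Ideal.mul_mem_mul hv (aux13_mon_mem y hα)
    · exact Ideal.mul_mem_mul hu (aux13_mon_mem y hα)
  have hiter : ∀ (s i j : ℕ), X^i ⊓ Y^j ≤ X^i * Y^j ⊔ Y^(j+s) := by
    intro s
    induction s with
    | zero =>
      intro i j
      rw [Nat.add_zero]
      exact le_sup_of_le_right inf_le_right
    | succ s ihs =>
      intro i j r hr
      obtain ⟨u, hu, v, hv, huv⟩ := Submodule.mem_sup.1 (ihs i j hr)
      have hvX : v ∈ X^i ⊓ Y^(j+s) := by
        constructor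
        · have hveq : v = r - u := by rw [← huv]; ring
          rw [hveq]
          exact sub_mem hr.1 (Ideal.mul_le_left hu)
        · exact hv
      have h7 := hstar i (j+s) hvX
      rw [← huv]
      refine add_mem (Submodule.mem_sup_left hu) ?_
      have h8 : X^i * Y^(j+s) ⊔ Y^(j+s+1) ≤ X^i * Y^j ⊔ Y^(j+(s+1)) := by
        refine sup_le_sup (Ideal.mul_mono_right
          (Ideal.pow_le_pow_right (Nat.le_add_right j s))) (le_of_eq ?_)
        rw [Nat.add_assoc]
      exact h8 h7
  intro i j
  refine le_antisymm ?_ Ideal.mul_le_inf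
  intro r hr
  refine aux13_closure (X^i * Y^j) r (fun s => ?_)
  have h1 := hiter s i j hr
  have hYn : Y^(j+s) ≤ (maximalIdeal R)^s := by
    refine le_trans (Ideal.pow_le_pow_right (Nat.le_add_left s j)) ?_
    refine Ideal.pow_right_mono ?_ s
    rw [hY, Ideal.span_le]
    rintro _ ⟨u, rfl⟩
    exact hy u
  exact (sup_le_sup_left hYn _) h1
end
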